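/- arXiv:0712.1896 — 7 statements merged into one kernel-verified Lean document; each statement's English description precedes it below -/
import Mathlib

section
/- For every bounded operator A on h⊗H and all u, v ∈ h, one has the operator inequalities 0 ≤ A(u,v)*·A(u,v) ≤ ‖u‖²·(A*A)(v,v) in the ordering of self-adjoint bounded operators on H. -/
/-!
STATEMENT 3: For every bounded operator `A` on `h ⊗ H` and `u v : h`,
`0 ≤ A(u,v)* · A(u,v) ≤ ‖u‖² · (A*A)(v,v)` in the ordering of self-adjoint bounded
operators on `H` (expressed via `ContinuousLinearMap.IsPositive`).

`h ⊗ H` is modelled abstractly by `E` with a bilinear map `tmul` with the characteristic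
inner-product identity and dense span of its range; `opAt A u v` is the operator `A(u,v)`
characterised by its matrix elements.
-/

open scoped ComplexInnerProductSpace
open ContinuousLinearMap

theorem stmt3
    {h H E : Type*}
    [NormedAddCommGroup h] [InnerProductSpace ℂ h] [CompleteSpace h]
    [TopologicalSpace.SeparableSpace h]
    [NormedAddCommGroup H] [InnerProductSpace ℂ H] [CompleteSpace H]
    [TopologicalSpace.SeparableSpace H]
    [NormedAddCommGroup E] [InnerProductSpace ℂ E] [CompleteSpace E]
    (tmul : h →ₗ[ℂ] H →ₗ[ℂ] E)
    (htmul : ∀ (u v : h) (ξ ζ : H), ⟪tmul u ξ, tmul v ζ⟫ = ⟪u, v⟫ * ⟪ξ, ζ⟫)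
    (hdense : (Submodule.span ℂ (Set.range fun p : h × H => tmul p.1 p.2)).topologicalClosure = ⊤)
    (opAt : (E →L[ℂ] E) → h → h → (H →L[ℂ] H))
    (hopAt : ∀ (A : E →L[ℂ] E) (u v : h) (ξ₁ ξ₂ : H),
      ⟪ξ₁, opAt A u v ξ₂⟫ = ⟪tmul u ξ₁, A (tmul v ξ₂)⟫)
    (A : E →L[ℂ] E) (u v : h) :
    (adjoint (opAt A u v) * opAt A u v).IsPositive ∧
    (((‖u‖ : ℂ) ^ 2) • opAt (adjoint A * A) v v
      - adjoint (opAt A u v) * opAt A u v).IsPositive := by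
  set T := opAt A u v with hTdef
  set S := opAt (adjoint A * A) v v with hSdef
  -- value of ⟪(T†T)ξ, ξ⟫
  have hTT : ∀ ξ : H, ⟪(adjoint T * T) ξ, ξ⟫ = ((‖T ξ‖ : ℂ)) ^ 2 := by
    intro ξ
    rw [mul_apply_eq_comp, adjoint_inner_left, inner_self_eq_norm_sq_to_K]
    norm_cast
  -- value of ⟪ξ, S ξ⟫
  have hSval : ∀ ξ : H, ⟪ξ, S ξ⟫ = ((‖A (tmul v ξ)‖ : ℂ)) ^ 2 := by
    intro ξ
    rw [hSdef, hopAt, mul_apply_eq_comp, adjoint_inner_right, inner_self_eq_norm_sq_to_K]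
    norm_cast
  -- norm of elementary tensors with u
  have hnt : ∀ w : H, ‖tmul u w‖ = ‖u‖ * ‖w‖ := by
    intro w
    have h1 := htmul u u w w
    rw [inner_self_eq_norm_sq_to_K, inner_self_eq_norm_sq_to_K,
      inner_self_eq_norm_sq_to_K] at h1
    have h2 : (‖tmul u w‖ : ℝ) ^ 2 = (‖u‖ * ‖w‖) ^ 2 := by
      rw [mul_pow]
      exact_mod_cast h1
    have hn1 : (0:ℝ) ≤ ‖tmul u w‖ := norm_nonneg _
    have hn2 : (0:ℝ) ≤ ‖u‖ * ‖w‖ := by positivity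
    nlinarith [sq_nonneg (‖tmul u w‖ - ‖u‖ * ‖w‖), sq_nonneg (‖tmul u w‖ + ‖u‖ * ‖w‖)]
  -- key Cauchy–Schwarz bound
  have hkey : ∀ ξ : H, ‖T ξ‖ ≤ ‖u‖ * ‖A (tmul v ξ)‖ := by
    intro ξ
    have h1 : ⟪T ξ, T ξ⟫ = ⟪tmul u (T ξ), A (tmul v ξ)⟫ := hopAt A u v (T ξ) ξ
    have h2 : ‖T ξ‖ ^ 2 ≤ ‖u‖ * ‖A (tmul v ξ)‖ * ‖T ξ‖ := by
      calc ‖T ξ‖ ^ 2 = ‖⟪T ξ, T ξ⟫‖ := by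
            rw [inner_self_eq_norm_sq_to_K]
            simp [Complex.norm_real]
        _ = ‖⟪tmul u (T ξ), A (tmul v ξ)⟫‖ := by rw [h1]
        _ ≤ ‖tmul u (T ξ)‖ * ‖A (tmul v ξ)‖ := norm_inner_le_norm _ _
        _ = ‖u‖ * ‖A (tmul v ξ)‖ * ‖T ξ‖ := by rw [hnt]; ring
    by_cases hz : ‖T ξ‖ = 0
    · rw [hz]; positivity
    · have hpos : 0 < ‖T ξ‖ := lt_of_le_of_ne (norm_nonneg _) (Ne.symm hz)
      have := le_of_mul_le_mul_right (by nlinarith : ‖T ξ‖ * ‖T ξ‖ ≤ (‖u‖ * ‖A (tmul v ξ)‖) * ‖T ξ‖) hpos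
      exact this
  constructor
  · rw [isPositive_iff_complex]
    intro ξ
    rw [hTT ξ]
    constructor
    · norm_cast
    · have : RCLike.re (((‖T ξ‖ : ℂ)) ^ 2) = ‖T ξ‖ ^ 2 := by norm_cast
      rw [this]; positivity
  · rw [isPositive_iff_complex]
    intro ξ
    have hval : ⟪(((‖u‖ : ℂ) ^ 2) • S - adjoint T * T) ξ, ξ⟫
        = ((‖u‖ ^ 2 * ‖A (tmul v ξ)‖ ^ 2 - ‖T ξ‖ ^ 2 : ℝ) : ℂ) := by
      rw [sub_apply, inner_sub_left, hTT ξ, smul_apply, inner_smul_left]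
      have hS' : ⟪S ξ, ξ⟫ = ((‖A (tmul v ξ)‖ : ℂ)) ^ 2 := by
        rw [← inner_conj_symm, hSval ξ]
        simp [map_pow, Complex.conj_ofReal]
      rw [hS', map_pow, Complex.conj_ofReal]
      push_cast
      ring
    rw [hval]
    have hnn : (0:ℝ) ≤ ‖u‖ ^ 2 * ‖A (tmul v ξ)‖ ^ 2 - ‖T ξ‖ ^ 2 := by
      have := hkey ξ
      nlinarith [norm_nonneg (T ξ), norm_nonneg u, norm_nonneg (A (tmul v ξ))]
    have hre : RCLike.re ((( ‖u‖ ^ 2 * ‖A (tmul v ξ)‖ ^ 2 - ‖T ξ‖ ^ 2 : ℝ)) : ℂ)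
        = ‖u‖ ^ 2 * ‖A (tmul v ξ)‖ ^ 2 - ‖T ξ‖ ^ 2 := by exact_mod_cast rfl
    rw [hre]
    exact ⟨rfl, hnn⟩
end

section
/- Let A be a bounded operator on h⊗H, n ≥ 1, ε = (ε₁,…,ε_n) ∈ {0,1}ⁿ and 1 ≤ m ≤ n. For all product vectors u = u₁⊗⋯⊗u_n and v = v₁⊗⋯⊗v_n in h^{⊗n}: (A^{(n,ε₁)}·A^{(n,ε₂)}⋯A^{(n,ε_m)})(u,v) = (∏_{i=1}^m A^{(ε_i)}(u_i,v_i)) · ∏_{i=m+1}^n ⟨u_i,v_i⟩ in B(H), the operator product taken in the displayed order. In particular, A^{(ε)}(u,v) = A^{(ε₁)}(u₁,v₁)·A^{(ε₂)}(u₂,v₂)⋯A^{(ε_n)}(u_n,v_n). -/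
/-!
STATEMENT 5 (Lemma on ampliations): For a bounded operator `A` on `h ⊗ H`, `n ≥ 1`,
`ε ∈ {0,1}ⁿ` and `1 ≤ m ≤ n`, and product vectors `u = u₁⊗⋯⊗u_n`, `v = v₁⊗⋯⊗v_n`:
`(A^{(n,ε₁)}⋯A^{(n,ε_m)})(u,v) = (∏_{i=1}^m A^{(ε_i)}(u_i,v_i)) · ∏_{i=m+1}^n ⟨u_i,v_i⟩`,
and in particular `A^{(ε)}(u,v) = ∏_{i=1}^n A^{(ε_i)}(u_i,v_i)`.

Modelling: `E` models `h ⊗ H` (map `tmul`), `K` models `h^{⊗n}` (map `tmuln` on product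
vectors), `F` models `h^{⊗n} ⊗ H` (map `tmulF`), each with the characteristic inner-product
identity and dense span.  `opAtE` (resp. `opAtF`) gives the operators `T(u,v)` on `H` for
operators `T` on `E` (resp. on `F`).  `ε k = true` stands for `ε_k = 1`, and
`A^{(ε_k)} = A` for `ε_k = 0`, `= A*` for `ε_k = 1`.  The ampliation `A^{(n,ε_k)}` is the
operator `Aamp k` on `F`, characterised by its matrix elements on product vectors.
Ordered products are `(List.ofFn f).prod = f 0 * f 1 * ⋯`.
-/

open scoped ComplexInnerProductSpace
open ContinuousLinearMap

section Helpers
variable {X : Type*} [NormedAddCommGroup X] [InnerProductSpace ℂ X]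

lemma my_dense_of_span_top {s : Set X} (hs : (Submodule.span ℂ s).topologicalClosure = ⊤) :
    Dense (Submodule.span ℂ s : Set X) :=
  Submodule.dense_iff_topologicalClosure_eq_top.mpr hs

lemma my_ext_inner_dense {s : Set X} (hs : (Submodule.span ℂ s).topologicalClosure = ⊤)
    {x y : X} (hxy : ∀ z ∈ s, ⟪z, x⟫ = ⟪z, y⟫) : x = y := by
  have hg : (innerSL ℂ (x - y)) = (0 : X →L[ℂ] ℂ) := by
    apply ContinuousLinearMap.ext_on (my_dense_of_span_top hs)
    intro z hz
    have h1 : ⟪z, x - y⟫ = 0 := by rw [inner_sub_right, hxy z hz, sub_self]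
    have h2 : ⟪x - y, z⟫ = 0 := by
      rw [← inner_conj_symm, h1, map_zero]
    simpa [inner_sub_left] using h2
  have := congrFun (congrArg (fun f : X →L[ℂ] ℂ => (f : X → ℂ)) hg) (x - y)
  simp only [innerSL_apply_apply, ContinuousLinearMap.zero_apply] at this
  have := inner_self_eq_zero.mp this
  exact sub_eq_zero.mp this

lemma my_norm_eq {Y Z : Type*} [NormedAddCommGroup Y] [InnerProductSpace ℂ Y]
    [NormedAddCommGroup Z] [InnerProductSpace ℂ Z]
    {v : Z} {x : X} {ξ : Y} (hv : (⟪v, v⟫ : ℂ) = ⟪x, x⟫ * ⟪ξ, ξ⟫) : ‖v‖ = ‖x‖ * ‖ξ‖ := by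
  rw [inner_self_eq_norm_sq_to_K, inner_self_eq_norm_sq_to_K, inner_self_eq_norm_sq_to_K] at hv
  have h2 : ‖v‖ ^ 2 = (‖x‖ * ‖ξ‖) ^ 2 := by
    have := hv
    push_cast at this
    norm_cast at this
    rw [this]; ring
  nlinarith [norm_nonneg v, mul_nonneg (norm_nonneg x) (norm_nonneg ξ), sq_nonneg (‖v‖ - ‖x‖*‖ξ‖)]

end Helpers

section ExtF
variable {H K F : Type*}
  [NormedAddCommGroup H] [InnerProductSpace ℂ H]
  [NormedAddCommGroup K] [InnerProductSpace ℂ K]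
  [NormedAddCommGroup F] [InnerProductSpace ℂ F]

/-- The continuous linear map `x ↦ tmulF x ξ`. -/
noncomputable def tmulFL (tmulF : K →ₗ[ℂ] H →ₗ[ℂ] F)
    (htmulF : ∀ (x y : K) (ξ ζ : H), ⟪tmulF x ξ, tmulF y ζ⟫ = ⟪x, y⟫ * ⟪ξ, ζ⟫)
    (ξ : H) : K →L[ℂ] F :=
  LinearMap.mkContinuous (tmulF.flip ξ) ‖ξ‖ (fun x => by
    have : ‖tmulF x ξ‖ = ‖x‖ * ‖ξ‖ := my_norm_eq (X := K) (htmulF x x ξ ξ)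
    simp only [LinearMap.flip_apply]
    rw [this, mul_comm])

@[simp] lemma tmulFL_apply (tmulF : K →ₗ[ℂ] H →ₗ[ℂ] F) (htmulF) (ξ : H) (x : K) :
    tmulFL tmulF htmulF ξ x = tmulF x ξ := rfl

lemma my_extF {s : Set K} (hdenseK : (Submodule.span ℂ s).topologicalClosure = ⊤)
    (tmulF : K →ₗ[ℂ] H →ₗ[ℂ] F)
    (htmulF : ∀ (x y : K) (ξ ζ : H), ⟪tmulF x ξ, tmulF y ζ⟫ = ⟪x, y⟫ * ⟪ξ, ζ⟫)
    (hdenseF : (Submodule.span ℂ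
      (Set.range fun p : K × H => tmulF p.1 p.2)).topologicalClosure = ⊤)
    {z₁ z₂ : F} (hz : ∀ x ∈ s, ∀ ξ : H, ⟪tmulF x ξ, z₁⟫ = ⟪tmulF x ξ, z₂⟫) : z₁ = z₂ := by
  apply my_ext_inner_dense hdenseF
  rintro _ ⟨⟨x, ξ⟩, rfl⟩
  have hg : (innerSL ℂ (z₁ - z₂)).comp (tmulFL tmulF htmulF ξ) = (0 : K →L[ℂ] ℂ) := by
    apply ContinuousLinearMap.ext_on (my_dense_of_span_top hdenseK)
    intro y hy
    have h1 : ⟪tmulF y ξ, z₁ - z₂⟫ = 0 := by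
      rw [inner_sub_right, hz y hy ξ, sub_self]
    have h2 : ⟪z₁ - z₂, tmulF y ξ⟫ = 0 := by rw [← inner_conj_symm, h1, map_zero]
    simpa [inner_sub_left] using h2
  have := congrFun (congrArg (fun f : K →L[ℂ] ℂ => (f : K → ℂ)) hg) x
  simp only [ContinuousLinearMap.comp_apply, tmulFL_apply, innerSL_apply_apply,
    ContinuousLinearMap.zero_apply] at this
  have h3 : ⟪tmulF x ξ, z₁ - z₂⟫ = 0 := by
    have h4 := congrArg (starRingEnd ℂ) this
    simpa [inner_sub_right] using h4
  rw [inner_sub_right, sub_eq_zero] at h3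
  exact h3

end ExtF

section ExistsJ
variable {h H E K F : Type*}
  [NormedAddCommGroup h] [InnerProductSpace ℂ h]
  [NormedAddCommGroup H] [InnerProductSpace ℂ H]
  [NormedAddCommGroup E] [InnerProductSpace ℂ E]
  [NormedAddCommGroup K] [InnerProductSpace ℂ K]
  [NormedAddCommGroup F] [InnerProductSpace ℂ F] [CompleteSpace F]

lemma prod_inner_update (n : ℕ) (v : Fin n → h) (k : Fin n) (y : Fin n → h) (a : h) :
    ∏ i, (⟪y i, Function.update v k a i⟫ : ℂ)
      = ⟪y k, a⟫ * ∏ i ∈ Finset.univ.erase k, ⟪y i, v i⟫ := by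
  rw [← Finset.mul_prod_erase Finset.univ _ (Finset.mem_univ k), Function.update_self]
  congr 1
  exact Finset.prod_congr rfl fun i hi => by
    rw [Function.update_of_ne (Finset.ne_of_mem_erase hi)]

lemma prod_inner_update₂ (n : ℕ) (v : Fin n → h) (k : Fin n) (a b : h) :
    ∏ i, (⟪Function.update v k a i, Function.update v k b i⟫ : ℂ)
      = ⟪a, b⟫ * ∏ i ∈ Finset.univ.erase k, ⟪v i, v i⟫ := by
  rw [← Finset.mul_prod_erase Finset.univ _ (Finset.mem_univ k), Function.update_self,
    Function.update_self]
  congr 1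
  exact Finset.prod_congr rfl fun i hi => by
    rw [Function.update_of_ne (Finset.ne_of_mem_erase hi),
      Function.update_of_ne (Finset.ne_of_mem_erase hi)]

lemma exists_j
    (tmul : h →ₗ[ℂ] H →ₗ[ℂ] E)
    (htmul : ∀ (u v : h) (ξ ζ : H), ⟪tmul u ξ, tmul v ζ⟫ = ⟪u, v⟫ * ⟪ξ, ζ⟫)
    (hdenseE : (Submodule.span ℂ
      (Set.range fun p : h × H => tmul p.1 p.2)).topologicalClosure = ⊤)
    (n : ℕ) (tmuln : (Fin n → h) → K)
    (htmuln : ∀ u v : Fin n → h, ⟪tmuln u, tmuln v⟫ = ∏ i, ⟪u i, v i⟫)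
    (hdenseK : (Submodule.span ℂ (Set.range tmuln)).topologicalClosure = ⊤)
    (tmulF : K →ₗ[ℂ] H →ₗ[ℂ] F)
    (htmulF : ∀ (x y : K) (ξ ζ : H), ⟪tmulF x ξ, tmulF y ζ⟫ = ⟪x, y⟫ * ⟪ξ, ζ⟫)
    (v : Fin n → h) (k : Fin n) :
    ∃ j : E →L[ℂ] F, ∀ (a : h) (η : H),
      j (tmul a η) = tmulF (tmuln (Function.update v k a)) η := by
  classical
  -- slot linearity of tmuln
  have hadd : ∀ a b : h, tmuln (Function.update v k (a + b))
      = tmuln (Function.update v k a) + tmuln (Function.update v k b) := by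
    intro a b
    apply my_ext_inner_dense hdenseK
    rintro _ ⟨y, rfl⟩
    rw [inner_add_right, htmuln, htmuln, htmuln, prod_inner_update, prod_inner_update,
      prod_inner_update, inner_add_right]
    ring
  have hsmul : ∀ (c : ℂ) (a : h), tmuln (Function.update v k (c • a))
      = c • tmuln (Function.update v k a) := by
    intro c a
    apply my_ext_inner_dense hdenseK
    rintro _ ⟨y, rfl⟩
    rw [inner_smul_right, htmuln, htmuln, prod_inner_update, prod_inner_update,
      inner_smul_right]
    ring
  set Lmap0 : h →ₗ[ℂ] K :=
    { toFun := fun a => tmuln (Function.update v k a)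
      map_add' := hadd
      map_smul' := hsmul } with hLmap0
  set Lmap : h →ₗ[ℂ] H →ₗ[ℂ] F := tmulF ∘ₗ Lmap0 with hLmapdef
  set Φ : TensorProduct ℂ h H →ₗ[ℂ] E := TensorProduct.lift tmul with hΦdef
  set Ψ : TensorProduct ℂ h H →ₗ[ℂ] F := TensorProduct.lift Lmap with hΨdef
  set c : ℂ := ∏ i ∈ Finset.univ.erase k, ⟪v i, v i⟫ with hcdef
  set cr : ℝ := ∏ i ∈ Finset.univ.erase k, ‖v i‖ ^ 2 with hcrdef
  have hcr0 : 0 ≤ cr := Finset.prod_nonneg fun i _ => sq_nonneg _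
  have hccr : c = (cr : ℂ) := by
    simp only [hcdef, hcrdef, inner_self_eq_norm_sq_to_K]
    push_cast
    rfl
  have hinner : ∀ x y : TensorProduct ℂ h H, ⟪Ψ x, Ψ y⟫ = c * ⟪Φ x, Φ y⟫ := by
    intro x y
    induction y using TensorProduct.induction_on with
    | zero => simp
    | tmul b ζ =>
      induction x using TensorProduct.induction_on with
      | zero => simp
      | tmul a η =>
        rw [hΨdef, hΦdef]
        simp only [TensorProduct.lift.tmul]
        rw [hLmapdef]
        simp only [LinearMap.comp_apply]
        rw [htmulF, htmul]
        simp only [hLmap0, LinearMap.coe_mk, AddHom.coe_mk]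
        rw [htmuln, prod_inner_update₂]
        ring
      | add x₁ x₂ ih₁ ih₂ =>
        simp only [map_add, inner_add_left, ih₁, ih₂]
        ring
    | add y₁ y₂ ih₁ ih₂ =>
      simp only [map_add, inner_add_right, ih₁, ih₂]
      ring
  have hker : LinearMap.ker Φ ≤ LinearMap.ker Ψ := by
    intro x hx
    rw [LinearMap.mem_ker] at hx ⊢
    have h1 := hinner x x
    rw [hx, inner_zero_right, mul_zero] at h1
    exact inner_self_eq_zero.mp h1
  set S : Submodule ℂ E := Submodule.span ℂ (Set.range fun p : h × H => tmul p.1 p.2)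
    with hSdef
  have hrange : LinearMap.range Φ = S := by
    apply le_antisymm
    · rintro _ ⟨x, rfl⟩
      induction x using TensorProduct.induction_on with
      | zero => simp
      | tmul a η =>
        rw [hΦdef]
        simp only [TensorProduct.lift.tmul]
        exact Submodule.subset_span ⟨(a, η), rfl⟩
      | add x₁ x₂ ih₁ ih₂ =>
        rw [map_add]; exact Submodule.add_mem _ ih₁ ih₂
    · rw [hSdef, Submodule.span_le]
      rintro _ ⟨⟨a, η⟩, rfl⟩
      exact ⟨a ⊗ₜ[ℂ] η, by rw [hΦdef]; simp [TensorProduct.lift.tmul]⟩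
  -- build the linear map on S
  set e1 := Φ.quotKerEquivRange with he1def
  set Ψq : (TensorProduct ℂ h H ⧸ LinearMap.ker Φ) →ₗ[ℂ] F :=
    (LinearMap.ker Φ).liftQ Ψ hker with hΨqdef
  set f₀ : S →ₗ[ℂ] F :=
    Ψq ∘ₗ (e1.symm.toLinearMap ∘ₗ (LinearEquiv.ofEq S (LinearMap.range Φ) hrange.symm).toLinearMap)
    with hf₀def
  have key : ∀ (x : TensorProduct ℂ h H) (hx : Φ x ∈ S), f₀ ⟨Φ x, hx⟩ = Ψ x := by
    intro x hx
    have hy : ((LinearEquiv.ofEq S (LinearMap.range Φ) hrange.symm) ⟨Φ x, hx⟩ : E) = Φ x := rfl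
    have h5 : e1 (Submodule.Quotient.mk x)
        = (LinearEquiv.ofEq S (LinearMap.range Φ) hrange.symm) ⟨Φ x, hx⟩ := by
      apply Subtype.ext
      rw [hy, he1def]
      exact Φ.quotKerEquivRange_apply_mk x
    have h6 : e1.symm ((LinearEquiv.ofEq S (LinearMap.range Φ) hrange.symm) ⟨Φ x, hx⟩)
        = Submodule.Quotient.mk x := by
      rw [← h5, LinearEquiv.symm_apply_apply]
    rw [hf₀def]
    simp only [LinearMap.comp_apply, LinearEquiv.coe_coe]
    rw [h6, hΨqdef, Submodule.liftQ_apply]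
  have hbound : ∀ s : S, ‖f₀ s‖ ≤ Real.sqrt cr * ‖s‖ := by
    rintro ⟨se, hse⟩
    obtain ⟨x, hx⟩ : ∃ x, Φ x = se := by
      rw [← hrange] at hse; exact hse
    have hmem : Φ x ∈ S := by rw [hx]; exact hse
    have h7 : (⟨se, hse⟩ : S) = ⟨Φ x, hmem⟩ := Subtype.ext hx.symm
    rw [h7, key x hmem]
    have h8 : (⟪Ψ x, Ψ x⟫ : ℂ) = (cr : ℂ) * ⟪Φ x, Φ x⟫ := by rw [hinner, hccr]
    rw [inner_self_eq_norm_sq_to_K, inner_self_eq_norm_sq_to_K] at h8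
    have h9 : ‖Ψ x‖ ^ 2 = cr * ‖Φ x‖ ^ 2 := by
      have h8' : ((‖Ψ x‖ ^ 2 : ℝ) : ℂ) = ((cr * ‖Φ x‖ ^ 2 : ℝ) : ℂ) := by
        push_cast
        exact h8
      exact_mod_cast h8'
    have h10 : ‖Ψ x‖ = Real.sqrt cr * ‖Φ x‖ := by
      rw [← Real.sqrt_sq (norm_nonneg (Ψ x)), h9, Real.sqrt_mul hcr0,
        Real.sqrt_sq (norm_nonneg (Φ x))]
    rw [h10]
    have hnorms : ‖(⟨Φ x, hmem⟩ : S)‖ = ‖Φ x‖ := rfl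
    rw [hnorms]
  set fc : S →L[ℂ] F := LinearMap.mkContinuous f₀ (Real.sqrt cr) hbound with hfcdef
  have hdense' : DenseRange (S.subtypeL) := by
    have : Dense (S : Set E) := Submodule.dense_iff_topologicalClosure_eq_top.mpr hdenseE
    exact this.denseRange_val
  have hui : IsUniformInducing (S.subtypeL : S →L[ℂ] E) := isUniformEmbedding_subtype_val.isUniformInducing
  refine ⟨fc.extend S.subtypeL, ?_⟩
  intro a η
  have hmem : tmul a η ∈ S := Submodule.subset_span ⟨(a, η), rfl⟩
  have h11 : tmul a η = S.subtypeL ⟨tmul a η, hmem⟩ := rfl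
  rw [h11, ContinuousLinearMap.extend_eq (h_dense := hdense') (h_e := hui)]
  have h12 : fc ⟨tmul a η, hmem⟩ = f₀ ⟨tmul a η, hmem⟩ := rfl
  rw [h12]
  have hmem2 : Φ (a ⊗ₜ[ℂ] η) ∈ S := by
    rw [hΦdef]; simpa [TensorProduct.lift.tmul] using hmem
  have h13 : (⟨tmul a η, hmem⟩ : S) = ⟨Φ (a ⊗ₜ[ℂ] η), hmem2⟩ := by
    apply Subtype.ext
    show (tmul a) η = Φ (a ⊗ₜ[ℂ] η)
    simp [hΦdef]
  rw [h13, key]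
  rw [hΨdef]
  simp only [TensorProduct.lift.tmul]
  rw [hLmapdef]
  simp only [LinearMap.comp_apply, hLmap0, LinearMap.coe_mk, AddHom.coe_mk]

end ExistsJ

section Main
variable {h H E K F : Type*}
  [NormedAddCommGroup h] [InnerProductSpace ℂ h]
  [NormedAddCommGroup H] [InnerProductSpace ℂ H] [CompleteSpace H]
  [NormedAddCommGroup E] [InnerProductSpace ℂ E] [CompleteSpace E]
  [NormedAddCommGroup K] [InnerProductSpace ℂ K]
  [NormedAddCommGroup F] [InnerProductSpace ℂ F] [CompleteSpace F]

lemma main_aux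
    (tmul : h →ₗ[ℂ] H →ₗ[ℂ] E)
    (htmul : ∀ (u v : h) (ξ ζ : H), ⟪tmul u ξ, tmul v ζ⟫ = ⟪u, v⟫ * ⟪ξ, ζ⟫)
    (hdenseE : (Submodule.span ℂ
      (Set.range fun p : h × H => tmul p.1 p.2)).topologicalClosure = ⊤)
    (opAtE : (E →L[ℂ] E) → h → h → (H →L[ℂ] H))
    (hopAtE : ∀ (T : E →L[ℂ] E) (u v : h) (ξ₁ ξ₂ : H),
      ⟪ξ₁, opAtE T u v ξ₂⟫ = ⟪tmul u ξ₁, T (tmul v ξ₂)⟫)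
    (n : ℕ) (tmuln : (Fin n → h) → K)
    (htmuln : ∀ u v : Fin n → h, ⟪tmuln u, tmuln v⟫ = ∏ i, ⟪u i, v i⟫)
    (hdenseK : (Submodule.span ℂ (Set.range tmuln)).topologicalClosure = ⊤)
    (tmulF : K →ₗ[ℂ] H →ₗ[ℂ] F)
    (htmulF : ∀ (x y : K) (ξ ζ : H), ⟪tmulF x ξ, tmulF y ζ⟫ = ⟪x, y⟫ * ⟪ξ, ζ⟫)
    (hdenseF : (Submodule.span ℂ
      (Set.range fun p : K × H => tmulF p.1 p.2)).topologicalClosure = ⊤)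
    (A : E →L[ℂ] E) (ε : Fin n → Bool)
    (Aamp : Fin n → (F →L[ℂ] F))
    (hAamp : ∀ (k : Fin n) (x y : Fin n → h) (ξ ζ : H),
      ⟪tmulF (tmuln x) ξ, Aamp k (tmulF (tmuln y) ζ)⟫
        = ⟪tmul (x k) ξ, (if ε k then ContinuousLinearMap.adjoint A else A) (tmul (y k) ζ)⟫
          * ∏ i ∈ Finset.univ.erase k, ⟪x i, y i⟫) :
    ∀ (t : List (Fin n)), t.Nodup → ∀ (u v : Fin n → h) (ξ ζ : H),
      ⟪tmulF (tmuln u) ξ, ((t.map Aamp).prod) (tmulF (tmuln v) ζ)⟫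
        = (∏ i ∈ Finset.univ.filter (fun i => i ∉ t), ⟪u i, v i⟫)
          * ⟪ξ, ((t.map fun k =>
              opAtE (if ε k then ContinuousLinearMap.adjoint A else A) (u k) (v k)).prod) ζ⟫ := by
  classical
  intro t
  induction t using List.reverseRecOn with
  | nil =>
    intro _ u v ξ ζ
    simp only [List.map_nil, List.prod_nil, ContinuousLinearMap.one_apply]
    rw [htmulF, htmuln]
    have : Finset.univ.filter (fun i : Fin n => i ∉ ([] : List (Fin n))) = Finset.univ := by
      ext i; simp
    rw [this]
  | append_singleton t k ih =>
    intro hnodup u v ξ ζ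
    have hkt : k ∉ t := by
      intro hmem
      have := List.disjoint_of_nodup_append hnodup
      exact this hmem (List.mem_singleton_self k)
    have htnd : t.Nodup := hnodup.of_append_left
    obtain ⟨j, hj⟩ := exists_j tmul htmul hdenseE n tmuln htmuln hdenseK tmulF htmulF v k
    -- the key inner product identity for j
    have hstar : ∀ (y : Fin n → h) (ζ' : H) (w : E),
        ⟪tmulF (tmuln y) ζ', j w⟫
          = (∏ i ∈ Finset.univ.erase k, ⟪y i, v i⟫) * ⟪tmul (y k) ζ', w⟫ := by
      intro y ζ'
      have heq : (innerSL ℂ (tmulF (tmuln y) ζ')).comp j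
          = (∏ i ∈ Finset.univ.erase k, (⟪y i, v i⟫ : ℂ)) •
              (innerSL ℂ (tmul (y k) ζ')) := by
        apply ContinuousLinearMap.ext_on (my_dense_of_span_top hdenseE)
        rintro _ ⟨⟨a, η⟩, rfl⟩
        simp only [ContinuousLinearMap.comp_apply, innerSL_apply_apply,
          ContinuousLinearMap.smul_apply, smul_eq_mul]
        rw [hj, htmulF, htmuln, prod_inner_update, htmul]
        ring
      intro w
      have := congrFun (congrArg (fun f : E →L[ℂ] ℂ => (f : E → ℂ)) heq) w
      simpa using this
    -- the action of `Aamp k` on a product vector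
    have hact : Aamp k (tmulF (tmuln v) ζ)
        = j ((if ε k then ContinuousLinearMap.adjoint A else A) (tmul (v k) ζ)) := by
      apply my_extF hdenseK tmulF htmulF hdenseF
      rintro _ ⟨y, rfl⟩ ξ'
      rw [hAamp k y v ξ' ζ, hstar]
      ring
    rw [List.map_append, List.prod_append, List.map_singleton, List.prod_singleton,
      ContinuousLinearMap.mul_apply, hact]
    set Aop : E →L[ℂ] E := if ε k then ContinuousLinearMap.adjoint A else A with hAopdef
    set B : H →L[ℂ] H := ((t.map fun k' =>
      opAtE (if ε k' then ContinuousLinearMap.adjoint A else A) (u k') (v k')).prod) with hBdef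
    set C : ℂ := ∏ i ∈ Finset.univ.filter (fun i => i ∉ t ++ [k]), ⟪u i, v i⟫ with hCdef
    have hkfil : k ∈ Finset.univ.filter (fun i => i ∉ t) := by
      simp [hkt]
    have herase : (Finset.univ.filter (fun i => i ∉ t)).erase k
        = Finset.univ.filter (fun i : Fin n => i ∉ t ++ [k]) := by
      ext i
      simp only [Finset.mem_erase, Finset.mem_filter, Finset.mem_univ, true_and,
        List.mem_append, List.mem_singleton]
      tauto
    have hmain : ∀ w : E,
        ⟪tmulF (tmuln u) ξ, ((t.map Aamp).prod) (j w)⟫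
          = C * ⟪tmul (u k) ((ContinuousLinearMap.adjoint B) ξ), w⟫ := by
      have heq : (innerSL ℂ (tmulF (tmuln u) ξ)).comp (((t.map Aamp).prod).comp j)
          = C • (innerSL ℂ (tmul (u k) ((ContinuousLinearMap.adjoint B) ξ))) := by
        apply ContinuousLinearMap.ext_on (my_dense_of_span_top hdenseE)
        rintro _ ⟨⟨a, η⟩, rfl⟩
        simp only [ContinuousLinearMap.comp_apply, innerSL_apply_apply,
          ContinuousLinearMap.smul_apply, smul_eq_mul]
        rw [hj, ih htnd u (Function.update v k a) ξ η]
        have hBeq : ((t.map fun k' =>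
            opAtE (if ε k' then ContinuousLinearMap.adjoint A else A) (u k')
              (Function.update v k a k')).prod) = B := by
          rw [hBdef]
          congr 1
          apply List.map_congr_left
          intro k' hk'
          have : k' ≠ k := fun hk => hkt (hk ▸ hk')
          rw [Function.update_of_ne this]
        have hprodeq : (∏ i ∈ Finset.univ.filter (fun i => i ∉ t),
            (⟪u i, Function.update v k a i⟫ : ℂ)) = ⟪u k, a⟫ * C := by
          rw [← Finset.mul_prod_erase _ _ hkfil, Function.update_self]
          congr 1
          rw [herase, hCdef]
          apply Finset.prod_congr rfl
          intro i hi
          have : i ≠ k := by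
            simp only [Finset.mem_filter, List.mem_append, List.mem_singleton] at hi
            tauto
          rw [Function.update_of_ne this]
        rw [hBeq, hprodeq, htmul]
        rw [ContinuousLinearMap.adjoint_inner_left]
        ring
      intro w
      have := congrFun (congrArg (fun f : E →L[ℂ] ℂ => (f : E → ℂ)) heq) w
      simpa using this
    rw [hmain]
    rw [← hopAtE Aop (u k) (v k) ((ContinuousLinearMap.adjoint B) ξ) ζ,
      ContinuousLinearMap.adjoint_inner_left]
    rw [List.map_append, List.prod_append, List.map_singleton, List.prod_singleton,
      ContinuousLinearMap.mul_apply]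

end Main


theorem stmt5
    {h H E K F : Type*}
    [NormedAddCommGroup h] [InnerProductSpace ℂ h] [CompleteSpace h]
    [TopologicalSpace.SeparableSpace h]
    [NormedAddCommGroup H] [InnerProductSpace ℂ H] [CompleteSpace H]
    [TopologicalSpace.SeparableSpace H]
    [NormedAddCommGroup E] [InnerProductSpace ℂ E] [CompleteSpace E]
    [NormedAddCommGroup K] [InnerProductSpace ℂ K] [CompleteSpace K]
    [NormedAddCommGroup F] [InnerProductSpace ℂ F] [CompleteSpace F]
    (tmul : h →ₗ[ℂ] H →ₗ[ℂ] E)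
    (htmul : ∀ (u v : h) (ξ ζ : H), ⟪tmul u ξ, tmul v ζ⟫ = ⟪u, v⟫ * ⟪ξ, ζ⟫)
    (hdenseE : (Submodule.span ℂ (Set.range fun p : h × H => tmul p.1 p.2)).topologicalClosure = ⊤)
    (opAtE : (E →L[ℂ] E) → h → h → (H →L[ℂ] H))
    (hopAtE : ∀ (T : E →L[ℂ] E) (u v : h) (ξ₁ ξ₂ : H),
      ⟪ξ₁, opAtE T u v ξ₂⟫ = ⟪tmul u ξ₁, T (tmul v ξ₂)⟫)
    (n : ℕ) (hn : 1 ≤ n)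
    (tmuln : (Fin n → h) → K)
    (htmuln : ∀ u v : Fin n → h, ⟪tmuln u, tmuln v⟫ = ∏ i, ⟪u i, v i⟫)
    (hdenseK : (Submodule.span ℂ (Set.range tmuln)).topologicalClosure = ⊤)
    (tmulF : K →ₗ[ℂ] H →ₗ[ℂ] F)
    (htmulF : ∀ (x y : K) (ξ ζ : H), ⟪tmulF x ξ, tmulF y ζ⟫ = ⟪x, y⟫ * ⟪ξ, ζ⟫)
    (hdenseF : (Submodule.span ℂ (Set.range fun p : K × H => tmulF p.1 p.2)).topologicalClosure = ⊤)
    (opAtF : (F →L[ℂ] F) → K → K → (H →L[ℂ] H))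
    (hopAtF : ∀ (T : F →L[ℂ] F) (x y : K) (ξ₁ ξ₂ : H),
      ⟪ξ₁, opAtF T x y ξ₂⟫ = ⟪tmulF x ξ₁, T (tmulF y ξ₂)⟫)
    (A : E →L[ℂ] E) (ε : Fin n → Bool)
    (Aamp : Fin n → (F →L[ℂ] F))
    (hAamp : ∀ (k : Fin n) (x y : Fin n → h) (ξ ζ : H),
      ⟪tmulF (tmuln x) ξ, Aamp k (tmulF (tmuln y) ζ)⟫
        = ⟪tmul (x k) ξ, (if ε k then adjoint A else A) (tmul (y k) ζ)⟫
          * ∏ i ∈ Finset.univ.erase k, ⟪x i, y i⟫)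
    (m : ℕ) (hm1 : 1 ≤ m) (hm : m ≤ n)
    (u v : Fin n → h) :
    opAtF ((List.ofFn fun k : Fin m => Aamp (Fin.castLE hm k)).prod) (tmuln u) (tmuln v)
      = (∏ i ∈ Finset.univ.filter (fun i : Fin n => m ≤ (i : ℕ)), ⟪u i, v i⟫) •
          (List.ofFn fun k : Fin m =>
            opAtE (if ε (Fin.castLE hm k) then adjoint A else A)
              (u (Fin.castLE hm k)) (v (Fin.castLE hm k))).prod ∧
    opAtF ((List.ofFn Aamp).prod) (tmuln u) (tmuln v)
      = (List.ofFn fun k : Fin n =>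
          opAtE (if ε k then adjoint A else A) (u k) (v k)).prod := by
  classical
  have main := main_aux tmul htmul hdenseE opAtE hopAtE n tmuln htmuln hdenseK tmulF htmulF
    hdenseF A ε Aamp hAamp
  constructor
  · -- partial products
    set t : List (Fin n) := List.ofFn (fun k : Fin m => Fin.castLE hm k) with htdef
    have hnd : t.Nodup := List.nodup_ofFn.mpr (fun a b hab => by
      apply Fin.ext
      have := congrArg Fin.val hab
      simpa using this)
    have hmemt : ∀ i : Fin n, i ∈ t ↔ (i : ℕ) < m := by
      intro i
      constructor
      · intro hi
        obtain ⟨jj, hjj⟩ := List.mem_ofFn.mp hi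
        rw [← hjj]
        exact jj.isLt
      · intro hi
        exact List.mem_ofFn.mpr ⟨⟨(i : ℕ), hi⟩, Fin.ext rfl⟩
    have hmap : t.map Aamp = List.ofFn fun k : Fin m => Aamp (Fin.castLE hm k) := by
      rw [htdef, List.map_ofFn]; rfl
    have hmap2 : (t.map fun k => opAtE (if ε k then adjoint A else A) (u k) (v k))
        = List.ofFn fun k : Fin m =>
            opAtE (if ε (Fin.castLE hm k) then adjoint A else A)
              (u (Fin.castLE hm k)) (v (Fin.castLE hm k)) := by
      rw [htdef, List.map_ofFn]; rfl
    have hfil : Finset.univ.filter (fun i : Fin n => i ∉ t)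
        = Finset.univ.filter (fun i : Fin n => m ≤ (i : ℕ)) := by
      ext i
      simp only [Finset.mem_filter, Finset.mem_univ, true_and, hmemt i]
      omega
    apply ContinuousLinearMap.ext
    intro ξ₂
    apply ext_inner_left ℂ
    intro ξ₁
    rw [hopAtF, ← hmap, main t hnd u v ξ₁ ξ₂, hmap2, ContinuousLinearMap.smul_apply,
      inner_smul_right, hfil]
  · -- full product
    set t : List (Fin n) := List.finRange n with htdef
    have hnd : t.Nodup := List.nodup_finRange n
    have hmap : t.map Aamp = List.ofFn Aamp := (List.ofFn_eq_map).symm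
    have hmap2 : (t.map fun k => opAtE (if ε k then adjoint A else A) (u k) (v k))
        = List.ofFn fun k : Fin n =>
            opAtE (if ε k then adjoint A else A) (u k) (v k) := (List.ofFn_eq_map).symm
    have hfil : Finset.univ.filter (fun i : Fin n => i ∉ t) = (∅ : Finset (Fin n)) := by
      ext i
      simp [htdef, List.mem_finRange]
    apply ContinuousLinearMap.ext
    intro ξ₂
    apply ext_inner_left ℂ
    intro ξ₁
    rw [hopAtF, ← hmap, main t hnd u v ξ₁ ξ₂, hmap2, hfil, Finset.prod_empty, one_mul]
end

section
/- Let U be a unitary operator on K⊗H, Ω a unit vector in H, and define the bounded operator T on K by ⟨φ, Tψ⟩ = ⟨φ⊗Ω, U(ψ⊗Ω)⟩ for all φ, ψ ∈ K. Then for every φ ∈ K: ‖(U − 1)(φ⊗Ω)‖² = ⟨(1 − T)φ, φ⟩ + ⟨φ, (1 − T)φ⟩, and consequently ‖(U − 1)(φ⊗Ω)‖² ≤ 2‖1 − T‖·‖φ‖². -/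
/-!
STATEMENT 9: Let `U` be a unitary on `K ⊗ H`, `Ω` a unit vector of `H`, and `T` the bounded
operator on `K` with `⟨φ, Tψ⟩ = ⟨φ⊗Ω, U(ψ⊗Ω)⟩`.  Then for every `φ : K`:
`‖(U − 1)(φ⊗Ω)‖² = ⟨(1−T)φ, φ⟩ + ⟨φ, (1−T)φ⟩` (an identity in ℂ) and consequently
`‖(U − 1)(φ⊗Ω)‖² ≤ 2‖1−T‖·‖φ‖²`.

`K ⊗ H` is modelled abstractly by `E` with a bilinear map `tmul` having the characteristic
inner-product identity and dense span of its range.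
-/

open scoped ComplexInnerProductSpace
open ContinuousLinearMap

theorem stmt9
    {K H E : Type*}
    [NormedAddCommGroup K] [InnerProductSpace ℂ K] [CompleteSpace K]
    [TopologicalSpace.SeparableSpace K]
    [NormedAddCommGroup H] [InnerProductSpace ℂ H] [CompleteSpace H]
    [TopologicalSpace.SeparableSpace H]
    [NormedAddCommGroup E] [InnerProductSpace ℂ E] [CompleteSpace E]
    (tmul : K →ₗ[ℂ] H →ₗ[ℂ] E)
    (htmul : ∀ (u v : K) (ξ ζ : H), ⟪tmul u ξ, tmul v ζ⟫ = ⟪u, v⟫ * ⟪ξ, ζ⟫)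
    (hdense : (Submodule.span ℂ (Set.range fun p : K × H => tmul p.1 p.2)).topologicalClosure = ⊤)
    (U : E →L[ℂ] E)
    (hU : adjoint U * U = 1 ∧ U * adjoint U = 1)
    (Ω : H) (hΩ : ‖Ω‖ = 1)
    (T : K →L[ℂ] K)
    (hT : ∀ φ ψ : K, ⟪φ, T ψ⟫ = ⟪tmul φ Ω, U (tmul ψ Ω)⟫)
    (φ : K) :
    ((‖(U - 1) (tmul φ Ω)‖ : ℂ) ^ 2 = ⟪(1 - T) φ, φ⟫ + ⟪φ, (1 - T) φ⟫) ∧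
    ‖(U - 1) (tmul φ Ω)‖ ^ 2 ≤ 2 * ‖(1 : K →L[ℂ] K) - T‖ * ‖φ‖ ^ 2 := by

  set x := tmul φ Ω with hxdef
  have hxx : ⟪x, x⟫ = ⟪φ, φ⟫ := by
    rw [htmul]
    have : ⟪Ω, Ω⟫ = (1 : ℂ) := by
      rw [inner_self_eq_norm_sq_to_K, hΩ]; norm_num
    rw [this, mul_one]
  have hUU : ⟪U x, U x⟫ = ⟪φ, φ⟫ := by
    have : ⟪U x, U x⟫ = ⟪x, (adjoint U * U) x⟫ := by
      rw [ContinuousLinearMap.mul_apply, adjoint_inner_right]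
    rw [this, hU.1, ContinuousLinearMap.one_apply, hxx]
  have hxUx : ⟪x, U x⟫ = ⟪φ, T φ⟫ := (hT φ φ).symm
  have hUxx : ⟪U x, x⟫ = ⟪T φ, φ⟫ := by
    have := congrArg (starRingEnd ℂ) hxUx
    rwa [inner_conj_symm, inner_conj_symm] at this
  have key : (‖(U - 1) x‖ : ℂ) ^ 2 = ⟪(1 - T) φ, φ⟫ + ⟪φ, (1 - T) φ⟫ := by
    have h0 : (⟪(U - 1) x, (U - 1) x⟫ : ℂ) = (‖(U - 1) x‖ : ℂ) ^ 2 :=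
      inner_self_eq_norm_sq_to_K _
    rw [← h0]
    simp only [sub_apply, one_apply, ContinuousLinearMap.sub_apply,
      ContinuousLinearMap.one_apply, inner_sub_left, inner_sub_right,
      hUU, hxUx, hUxx, hxx]
    ring
  refine ⟨key, ?_⟩
  have hre : ‖(U - 1) x‖ ^ 2 = 2 * (⟪φ, (1 - T) φ⟫ : ℂ).re := by
    have h1 := congrArg Complex.re key
    have h2 : ((‖(U - 1) x‖ : ℂ) ^ 2).re = ‖(U - 1) x‖ ^ 2 := by
      norm_cast
    have h3 : (⟪(1 - T) φ, φ⟫ : ℂ).re = (⟪φ, (1 - T) φ⟫ : ℂ).re := by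
      exact inner_re_symm (𝕜 := ℂ) _ _
    rw [h2, Complex.add_re, h3] at h1
    linarith
  rw [hre]
  have hb : (⟪φ, (1 - T) φ⟫ : ℂ).re ≤ ‖(1 : K →L[ℂ] K) - T‖ * ‖φ‖ ^ 2 := by
    calc (⟪φ, (1 - T) φ⟫ : ℂ).re ≤ ‖(⟪φ, (1 - T) φ⟫ : ℂ)‖ := Complex.re_le_norm _
      _ ≤ ‖φ‖ * ‖(1 - T) φ‖ := norm_inner_le_norm _ _
      _ ≤ ‖φ‖ * (‖(1 : K →L[ℂ] K) - T‖ * ‖φ‖) := by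
          gcongr; exact ((1 : K →L[ℂ] K) - T).le_opNorm φ
      _ = ‖(1 : K →L[ℂ] K) - T‖ * ‖φ‖ ^ 2 := by ring
  linarith
end

section
/- Let U be a unitary operator on h⊗H, Ω a unit vector in H, {e_m}_{m≥1} an orthonormal basis of h, and T the bounded operator on h with ⟨φ, Tψ⟩ = ⟨φ⊗Ω, U(ψ⊗Ω)⟩. Then for every v ∈ h the series Σ_m ‖(U − 1)(e_m,v)Ω‖² converges and Σ_m ‖(U − 1)(e_m,v)Ω‖² = 2 Re⟨v, (1 − T)v⟩ ≤ 2‖v‖²·‖1 − T‖. -/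
open scoped ComplexInnerProductSpace
open ContinuousLinearMap

private lemma aux_mem_closed {E : Type*} [NormedAddCommGroup E] [Module ℂ E]
    [ContinuousAdd E] {K : Submodule ℂ E} (hK : IsClosed (K : Set E)) {ι : Type*} {g : ι → E}
    {x : E} (hx : HasSum g x) (hg : ∀ i, g i ∈ K) : x ∈ K :=
  hK.mem_of_tendsto hx (Filter.Eventually.of_forall fun _ =>
    K.sum_mem fun i _ => hg i)

private lemma aux_parseval {F : Type*} [NormedAddCommGroup F] [InnerProductSpace ℂ F]
    [CompleteSpace F] {ι : Type*} (b : HilbertBasis ι ℂ F) (x : F) :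
    HasSum (fun i => ‖⟪b i, x⟫‖ ^ 2) (‖x‖ ^ 2) := by
  have h1 := (b.hasSum_inner_mul_inner x x).mapL Complex.reCLM
  have h2 : ∀ i, Complex.reCLM (⟪x, b i⟫ * ⟪b i, x⟫) = ‖⟪b i, x⟫‖ ^ 2 := by
    intro i
    have hcj : ⟪x, b i⟫ = starRingEnd ℂ ⟪b i, x⟫ := (inner_conj_symm _ _).symm
    rw [Complex.reCLM_apply, hcj, mul_comm, Complex.mul_conj]
    rw [Complex.ofReal_re, Complex.normSq_eq_norm_sq]
  have h3 : Complex.reCLM ⟪x, x⟫ = ‖x‖ ^ 2 := by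
    simpa using inner_self_eq_norm_sq (𝕜 := ℂ) x
  have h4 : ((‖x‖ : ℂ) ^ 2).re = ‖x‖ ^ 2 := by
    rw [← Complex.ofReal_pow, Complex.ofReal_re]
  simpa [h2, h3, h4] using h1

theorem stmt10
    {h H E : Type*}
    [NormedAddCommGroup h] [InnerProductSpace ℂ h] [CompleteSpace h]
    [TopologicalSpace.SeparableSpace h]
    [NormedAddCommGroup H] [InnerProductSpace ℂ H] [CompleteSpace H]
    [TopologicalSpace.SeparableSpace H]
    [NormedAddCommGroup E] [InnerProductSpace ℂ E] [CompleteSpace E]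
    (tmul : h →ₗ[ℂ] H →ₗ[ℂ] E)
    (htmul : ∀ (u v : h) (ξ ζ : H), ⟪tmul u ξ, tmul v ζ⟫ = ⟪u, v⟫ * ⟪ξ, ζ⟫)
    (hdense : (Submodule.span ℂ (Set.range fun p : h × H => tmul p.1 p.2)).topologicalClosure = ⊤)
    (opAt : (E →L[ℂ] E) → h → h → (H →L[ℂ] H))
    (hopAt : ∀ (A : E →L[ℂ] E) (u v : h) (ξ₁ ξ₂ : H),
      ⟪ξ₁, opAt A u v ξ₂⟫ = ⟪tmul u ξ₁, A (tmul v ξ₂)⟫)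
    (U : E →L[ℂ] E)
    (hU : adjoint U * U = 1 ∧ U * adjoint U = 1)
    (Ω : H) (hΩ : ‖Ω‖ = 1)
    (e : HilbertBasis ℕ ℂ h)
    (T : h →L[ℂ] h)
    (hT : ∀ φ ψ : h, ⟪φ, T ψ⟫ = ⟪tmul φ Ω, U (tmul ψ Ω)⟫)
    (v : h) :
    HasSum (fun m : ℕ => ‖(opAt (U - 1) (e m) v) Ω‖ ^ 2)
        (2 * (⟪v, ((1 : h →L[ℂ] h) - T) v⟫).re) ∧
    2 * (⟪v, ((1 : h →L[ℂ] h) - T) v⟫).re ≤ 2 * ‖v‖ ^ 2 * ‖(1 : h →L[ℂ] h) - T‖ := by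
  classical
  -- norm identity for tmul
  have hnorm : ∀ (u : h) (ξ : H), ‖tmul u ξ‖ = ‖u‖ * ‖ξ‖ := by
    intro u ξ
    have h1 : (⟪tmul u ξ, tmul u ξ⟫ : ℂ) = (((‖u‖ * ‖ξ‖) ^ 2 : ℝ) : ℂ) := by
      rw [htmul, inner_self_eq_norm_sq_to_K, inner_self_eq_norm_sq_to_K]
      norm_cast
      try ring
      try rfl
    have h2 : ‖tmul u ξ‖ ^ 2 = (‖u‖ * ‖ξ‖) ^ 2 := by
      have h4 := inner_self_eq_norm_sq (𝕜 := ℂ) (tmul u ξ)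
      rw [h1] at h4
      simpa [← Complex.ofReal_mul, ← Complex.ofReal_pow] using h4.symm
    have h3 : (0:ℝ) ≤ ‖u‖ * ‖ξ‖ := mul_nonneg (norm_nonneg _) (norm_nonneg _)
    nlinarith [norm_nonneg (tmul u ξ)]
  -- continuous linear maps in each slot
  let R : h → (H →L[ℂ] E) := fun u =>
    LinearMap.mkContinuous (tmul u) ‖u‖ (fun ξ => le_of_eq (hnorm u ξ))
  have hR : ∀ (u : h) (ξ : H), R u ξ = tmul u ξ := fun _ _ => rfl
  let Lc : H → (h →L[ℂ] E) := fun ξ =>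
    LinearMap.mkContinuous (tmul.flip ξ) ‖ξ‖ (fun u => by
      rw [LinearMap.flip_apply, hnorm, mul_comm])
  have hLc : ∀ (ξ : H) (u : h), Lc ξ u = tmul u ξ := fun _ _ => rfl
  -- a Hilbert basis of H
  obtain ⟨w, f, -⟩ := exists_hilbertBasis ℂ H
  set b : ℕ × w → E := fun p => tmul (e p.1) (f p.2) with hb
  have horth : Orthonormal ℂ b := by
    rw [orthonormal_iff_ite]
    intro p q
    have he := orthonormal_iff_ite.mp e.orthonormal p.1 q.1
    have hfo := orthonormal_iff_ite.mp f.orthonormal p.2 q.2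
    simp only [hb, htmul, he, hfo]
    by_cases h1 : p.1 = q.1 <;> by_cases h2 : p.2 = q.2 <;>
      simp [h1, h2, Prod.ext_iff]
  -- dense span of b
  set K := (Submodule.span ℂ (Set.range b)).topologicalClosure with hKdef
  have hKc : IsClosed (K : Set E) := Submodule.isClosed_topologicalClosure _
  have hmem1 : ∀ (m : ℕ) (ξ : H), tmul (e m) ξ ∈ K := by
    intro m ξ
    have hs := (f.hasSum_repr ξ).mapL (R (e m))
    refine aux_mem_closed hKc hs ?_
    intro i
    have h4 : R (e m) (f.repr ξ i • f i) = f.repr ξ i • tmul (e m) (f i) := by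
      rw [map_smul, hR]
    rw [h4]
    exact K.smul_mem _ (Submodule.le_topologicalClosure _
      (Submodule.subset_span ⟨(m, i), rfl⟩))
  have hmem2 : ∀ (u : h) (ξ : H), tmul u ξ ∈ K := by
    intro u ξ
    have hs := (e.hasSum_repr u).mapL (Lc ξ)
    refine aux_mem_closed hKc hs ?_
    intro m
    have h4 : Lc ξ (e.repr u m • e m) = e.repr u m • tmul (e m) ξ := by
      rw [map_smul, hLc]
    rw [h4]
    exact K.smul_mem _ (hmem1 m ξ)
  have htop : ⊤ ≤ (Submodule.span ℂ (Set.range b)).topologicalClosure := by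
    rw [← hdense]
    refine Submodule.topologicalClosure_minimal _ ?_ hKc
    rw [Submodule.span_le]
    rintro _ ⟨⟨u, ξ⟩, rfl⟩
    exact hmem2 u ξ
  set B : HilbertBasis (ℕ × w) ℂ E := HilbertBasis.mk horth htop with hBdef
  set y : E := tmul v Ω with hy
  set x : E := (U - 1) y with hx
  -- Parseval in E
  have hBc : ∀ p : ℕ × w, B p = b p := fun p => by
    rw [hBdef, HilbertBasis.coe_mk]
  have hxsum : HasSum (fun p : ℕ × w => ‖⟪b p, x⟫‖ ^ 2) (‖x‖ ^ 2) := by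
    have h7 := aux_parseval B x
    have h8 : (fun p : ℕ × w => ‖⟪B p, x⟫‖ ^ 2) = fun p => ‖⟪b p, x⟫‖ ^ 2 :=
      funext fun p => by rw [hBc]
    rwa [h8] at h7
  -- fiberwise sums
  have hfib : ∀ m : ℕ, HasSum (fun i : w => ‖⟪b (m, i), x⟫‖ ^ 2)
      (‖opAt (U - 1) (e m) v Ω‖ ^ 2) := by
    intro m
    have hp := aux_parseval f (opAt (U - 1) (e m) v Ω)
    have heq : ∀ i : w, ‖⟪b (m, i), x⟫‖ ^ 2 = ‖⟪f i, opAt (U - 1) (e m) v Ω⟫‖ ^ 2 := by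
      intro i
      rw [hopAt (U - 1) (e m) v (f i) Ω]
    rwa [funext heq]
  have hmain : HasSum (fun m : ℕ => ‖(opAt (U - 1) (e m) v) Ω‖ ^ 2) (‖x‖ ^ 2) :=
    HasSum.prod_fiberwise hxsum hfib
  -- adjoint identity
  have hUadj : adjoint U (U y) = y := by
    have := congrArg (fun S : E →L[ℂ] E => S y) hU.1
    simpa using this
  have hyy : ⟪y, y⟫ = ((‖v‖ : ℂ)) ^ 2 := by
    rw [hy, htmul, inner_self_eq_norm_sq_to_K, inner_self_eq_norm_sq_to_K, hΩ]
    norm_num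
  have hUyUy : ⟪U y, U y⟫ = ((‖v‖ : ℂ)) ^ 2 := by
    rw [← ContinuousLinearMap.adjoint_inner_right U y (U y), hUadj, hyy]
  have hyUy : ⟪y, U y⟫ = ⟪v, T v⟫ := (hT v v).symm
  have hUyy : ⟪U y, y⟫ = starRingEnd ℂ ⟪v, T v⟫ := by
    rw [← inner_conj_symm, hyUy]
  have hxx : ⟪x, x⟫ = ((‖v‖ : ℂ)) ^ 2 - starRingEnd ℂ ⟪v, T v⟫ - ⟪v, T v⟫
      + ((‖v‖ : ℂ)) ^ 2 := by
    have hx' : x = U y - y := by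
      rw [hx]; simp [ContinuousLinearMap.sub_apply]
    rw [hx', inner_sub_sub_self, hUyUy, hUyy, hyUy, hyy]
  have hvv : (⟪v, v⟫ : ℂ).re = ‖v‖ ^ 2 := by
    simpa using inner_self_eq_norm_sq (𝕜 := ℂ) v
  have hval : ‖x‖ ^ 2 = 2 * (⟪v, ((1 : h →L[ℂ] h) - T) v⟫).re := by
    have h5 : ‖x‖ ^ 2 = (⟪x, x⟫ : ℂ).re := by
      simpa using (inner_self_eq_norm_sq (𝕜 := ℂ) x).symm
    have h6 : ⟪v, ((1 : h →L[ℂ] h) - T) v⟫ = ⟪v, v⟫ - ⟪v, T v⟫ := by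
      simp [ContinuousLinearMap.sub_apply, inner_sub_right]
    rw [h5, hxx, h6]
    simp only [Complex.add_re, Complex.sub_re, Complex.conj_re, Complex.ofReal_pow]
    rw [← Complex.ofReal_pow]
    simp only [Complex.ofReal_re]
    rw [← hvv]
    ring
  refine ⟨hval ▸ hmain, ?_⟩
  -- the inequality
  have hre : (⟪v, ((1 : h →L[ℂ] h) - T) v⟫).re ≤ ‖v‖ ^ 2 * ‖(1 : h →L[ℂ] h) - T‖ := by
    calc (⟪v, ((1 : h →L[ℂ] h) - T) v⟫).re
        ≤ ‖⟪v, ((1 : h →L[ℂ] h) - T) v⟫‖ := by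
          exact Complex.re_le_norm _
      _ ≤ ‖v‖ * ‖((1 : h →L[ℂ] h) - T) v‖ := norm_inner_le_norm _ _
      _ ≤ ‖v‖ * (‖(1 : h →L[ℂ] h) - T‖ * ‖v‖) := by
          gcongr
          exact ContinuousLinearMap.le_opNorm _ _
      _ = ‖v‖ ^ 2 * ‖(1 : h →L[ℂ] h) - T‖ := by ring
  linarith
end

section
/- Assume each U_t is unitary and Assumption C holds. Then for every n ≥ 3, all u_i, v_i ∈ h and all ε_i ∈ {0,1} (i = 1,…,n): lim_{t→0} (1/t)·⟨Ω, (U_t^{(ε₁)} − 1)(u₁,v₁)·(U_t^{(ε₂)} − 1)(u₂,v₂) ⋯ (U_t^{(ε_n)} − 1)(u_n,v_n)·Ω⟩ = 0. -/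
open scoped ComplexInnerProductSpace
open ContinuousLinearMap Filter

set_option linter.unusedSectionVars false
namespace Stmt14

variable {h H E : Type*}
  [NormedAddCommGroup h] [InnerProductSpace ℂ h]
  [NormedAddCommGroup H] [InnerProductSpace ℂ H] [CompleteSpace H]
  [NormedAddCommGroup E] [InnerProductSpace ℂ E] [CompleteSpace E]

lemma real_eq_of_sq {a b : ℝ} (ha : 0 ≤ a) (hb : 0 ≤ b) (hab : a ^ 2 = b ^ 2) : a = b := by
  nlinarith

lemma norm_tmul (tmul : h →ₗ[ℂ] H →ₗ[ℂ] E)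
    (htmul : ∀ (u v : h) (ξ ζ : H), ⟪tmul u ξ, tmul v ζ⟫ = ⟪u, v⟫ * ⟪ξ, ζ⟫)
    (u : h) (ξ : H) : ‖tmul u ξ‖ = ‖u‖ * ‖ξ‖ := by
  have h1 := htmul u u ξ ξ
  apply real_eq_of_sq (norm_nonneg _) (by positivity)
  have h2 : ‖tmul u ξ‖ ^ 2 = ‖u‖ ^ 2 * ‖ξ‖ ^ 2 := by
    rw [norm_sq_eq_re_inner (𝕜 := ℂ), h1, inner_self_eq_norm_sq_to_K, inner_self_eq_norm_sq_to_K]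
    simp [← Complex.ofReal_pow, ← Complex.ofReal_mul]
  rw [h2]; ring

lemma opAt_apply_norm_le
    (tmul : h →ₗ[ℂ] H →ₗ[ℂ] E)
    (htmul : ∀ (u v : h) (ξ ζ : H), ⟪tmul u ξ, tmul v ζ⟫ = ⟪u, v⟫ * ⟪ξ, ζ⟫)
    (opAt : (E →L[ℂ] E) → h → h → (H →L[ℂ] H))
    (hopAt : ∀ (A : E →L[ℂ] E) (u v : h) (ξ₁ ξ₂ : H),
      ⟪ξ₁, opAt A u v ξ₂⟫ = ⟪tmul u ξ₁, A (tmul v ξ₂)⟫)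
    (A : E →L[ℂ] E) (u v : h) (ξ : H) :
    ‖opAt A u v ξ‖ ≤ ‖u‖ * ‖A (tmul v ξ)‖ := by
  have h1 := hopAt A u v (opAt A u v ξ) ξ
  have h2 : ‖opAt A u v ξ‖ ^ 2 = RCLike.re (⟪opAt A u v ξ, opAt A u v ξ⟫ : ℂ) :=
    norm_sq_eq_re_inner (𝕜 := ℂ) _
  rw [h1] at h2
  have h3 : ‖opAt A u v ξ‖ ^ 2 ≤ ‖u‖ * ‖opAt A u v ξ‖ * ‖A (tmul v ξ)‖ := by
    rw [h2]
    calc RCLike.re (⟪tmul u (opAt A u v ξ), A (tmul v ξ)⟫ : ℂ)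
        ≤ ‖(⟪tmul u (opAt A u v ξ), A (tmul v ξ)⟫ : ℂ)‖ := RCLike.re_le_norm _
      _ ≤ ‖tmul u (opAt A u v ξ)‖ * ‖A (tmul v ξ)‖ := norm_inner_le_norm _ _
      _ = ‖u‖ * ‖opAt A u v ξ‖ * ‖A (tmul v ξ)‖ := by rw [norm_tmul tmul htmul]
  rcases eq_or_lt_of_le (norm_nonneg (opAt A u v ξ)) with h0 | h0
  · rw [← h0]; positivity
  · nlinarith

lemma opAt_norm_le
    (tmul : h →ₗ[ℂ] H →ₗ[ℂ] E)
    (htmul : ∀ (u v : h) (ξ ζ : H), ⟪tmul u ξ, tmul v ζ⟫ = ⟪u, v⟫ * ⟪ξ, ζ⟫)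
    (opAt : (E →L[ℂ] E) → h → h → (H →L[ℂ] H))
    (hopAt : ∀ (A : E →L[ℂ] E) (u v : h) (ξ₁ ξ₂ : H),
      ⟪ξ₁, opAt A u v ξ₂⟫ = ⟪tmul u ξ₁, A (tmul v ξ₂)⟫)
    (A : E →L[ℂ] E) (u v : h) :
    ‖opAt A u v‖ ≤ ‖A‖ * ‖u‖ * ‖v‖ := by
  apply opNorm_le_bound _ (by positivity)
  intro ξ
  calc ‖opAt A u v ξ‖ ≤ ‖u‖ * ‖A (tmul v ξ)‖ := opAt_apply_norm_le tmul htmul opAt hopAt A u v ξ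
    _ ≤ ‖u‖ * (‖A‖ * ‖tmul v ξ‖) := by
        apply mul_le_mul_of_nonneg_left (A.le_opNorm _) (norm_nonneg _)
    _ = ‖A‖ * ‖u‖ * ‖v‖ * ‖ξ‖ := by rw [norm_tmul tmul htmul]; ring

lemma opAt_add
    (tmul : h →ₗ[ℂ] H →ₗ[ℂ] E)
    (opAt : (E →L[ℂ] E) → h → h → (H →L[ℂ] H))
    (hopAt : ∀ (A : E →L[ℂ] E) (u v : h) (ξ₁ ξ₂ : H),
      ⟪ξ₁, opAt A u v ξ₂⟫ = ⟪tmul u ξ₁, A (tmul v ξ₂)⟫)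
    (A B : E →L[ℂ] E) (u v : h) :
    opAt (A + B) u v = opAt A u v + opAt B u v := by
  ext ξ
  apply ext_inner_left ℂ
  intro ξ₁
  simp [hopAt, inner_add_right]

lemma opAt_neg
    (tmul : h →ₗ[ℂ] H →ₗ[ℂ] E)
    (opAt : (E →L[ℂ] E) → h → h → (H →L[ℂ] H))
    (hopAt : ∀ (A : E →L[ℂ] E) (u v : h) (ξ₁ ξ₂ : H),
      ⟪ξ₁, opAt A u v ξ₂⟫ = ⟪tmul u ξ₁, A (tmul v ξ₂)⟫)
    (A : E →L[ℂ] E) (u v : h) :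
    opAt (-A) u v = -(opAt A u v) := by
  ext ξ
  apply ext_inner_left ℂ
  intro ξ₁
  simp [hopAt, inner_neg_right]

lemma opAt_smul
    (tmul : h →ₗ[ℂ] H →ₗ[ℂ] E)
    (opAt : (E →L[ℂ] E) → h → h → (H →L[ℂ] H))
    (hopAt : ∀ (A : E →L[ℂ] E) (u v : h) (ξ₁ ξ₂ : H),
      ⟪ξ₁, opAt A u v ξ₂⟫ = ⟪tmul u ξ₁, A (tmul v ξ₂)⟫)
    (A : E →L[ℂ] E) (u v : h) (c : ℝ) :
    opAt A ((c : ℂ) • u) ((c : ℂ) • v) = ((c : ℂ) ^ 2) • opAt A u v := by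
  ext ξ
  apply ext_inner_left ℂ
  intro ξ₁
  simp only [hopAt, map_smul, LinearMap.smul_apply, inner_smul_left, inner_smul_right,
    ContinuousLinearMap.smul_apply, Complex.conj_ofReal]
  ring

lemma opAt_adjoint
    (tmul : h →ₗ[ℂ] H →ₗ[ℂ] E)
    (opAt : (E →L[ℂ] E) → h → h → (H →L[ℂ] H))
    (hopAt : ∀ (A : E →L[ℂ] E) (u v : h) (ξ₁ ξ₂ : H),
      ⟪ξ₁, opAt A u v ξ₂⟫ = ⟪tmul u ξ₁, A (tmul v ξ₂)⟫)
    (A : E →L[ℂ] E) (u v : h) :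
    adjoint (opAt A u v) = opAt (adjoint A) v u := by
  ext ξ
  apply ext_inner_left ℂ
  intro ξ₁
  rw [adjoint_inner_right, hopAt (adjoint A) v u ξ₁ ξ, adjoint_inner_right]
  have h2 := congrArg (starRingEnd ℂ) (hopAt A u v ξ ξ₁)
  rwa [inner_conj_symm, inner_conj_symm] at h2


lemma unitary_norm_le_one (W : E →L[ℂ] E) (hW1 : adjoint W * W = 1) : ‖W‖ ≤ 1 := by
  apply opNorm_le_bound _ zero_le_one
  intro x
  have h1 : (⟪W x, W x⟫ : ℂ) = ⟪x, x⟫ := by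
    rw [← adjoint_inner_right]
    have : adjoint W (W x) = (adjoint W * W) x := rfl
    rw [this, hW1, ContinuousLinearMap.one_apply]
  have h2 : ‖W x‖ = ‖x‖ := by
    apply real_eq_of_sq (norm_nonneg _) (norm_nonneg _)
    rw [norm_sq_eq_re_inner (𝕜 := ℂ), h1, inner_self_eq_norm_sq]
  rw [h2, one_mul]

/-- The operator `U_t^{(ε)} - 1`. -/
noncomputable def dop (W : E →L[ℂ] E) (ε : Bool) : E →L[ℂ] E :=
  (if ε then adjoint W else W) - 1

lemma dop_adjoint (W : E →L[ℂ] E) (ε : Bool) : adjoint (dop W ε) = dop W (!ε) := by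
  cases ε <;>
    simp [dop, ← star_eq_adjoint, star_sub, star_one, star_star]

lemma dop_mul (W : E →L[ℂ] E) (hW1 : adjoint W * W = 1) (hW2 : W * adjoint W = 1) (ε : Bool) :
    dop W (!ε) * dop W ε = -(dop W false + dop W true) := by
  cases ε
  · show ((adjoint W) - 1) * (W - 1) = -((W - 1) + ((adjoint W) - 1))
    rw [sub_mul, mul_sub, mul_sub, one_mul, mul_one, mul_one, hW1]
    abel
  · show (W - 1) * ((adjoint W) - 1) = -((W - 1) + ((adjoint W) - 1))
    rw [sub_mul, mul_sub, mul_sub, one_mul, mul_one, mul_one, hW2]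
    abel

lemma dop_norm_le (W : E →L[ℂ] E) (hW1 : adjoint W * W = 1) (hW2 : W * adjoint W = 1)
    (ε : Bool) : ‖dop W ε‖ ≤ 2 := by
  have hadj : ‖adjoint W‖ ≤ 1 := by
    apply unitary_norm_le_one
    rw [adjoint_adjoint]; exact hW2
  have hone : ‖(1 : E →L[ℂ] E)‖ ≤ 1 := by
    rw [ContinuousLinearMap.one_def]; exact norm_id_le
  have hW : ‖W‖ ≤ 1 := unitary_norm_le_one W hW1
  calc ‖dop W ε‖ ≤ ‖(if ε then adjoint W else W)‖ + ‖(1 : E →L[ℂ] E)‖ := norm_sub_le _ _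
    _ ≤ 1 + 1 := by
        apply add_le_add _ hone
        cases ε <;> simpa
    _ = 2 := by norm_num

section Words

variable {ι : Type*}

/-- letter `(a, b, ε)` ↦ the operator `(U^{(ε)}-1)(w a, w b)` on `H`. -/
noncomputable def opOf (opAt : (E →L[ℂ] E) → h → h → (H →L[ℂ] H)) (W : E →L[ℂ] E) (w : ι → h)
    (p : ι × ι × Bool) : H →L[ℂ] H :=
  opAt (dop W p.2.2) (w p.1) (w p.2.1)

/-- formal adjoint of a letter -/
def st (p : ι × ι × Bool) : ι × ι × Bool := (p.2.1, p.1, !p.2.2)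

lemma st_st (p : ι × ι × Bool) : st (st p) = p := by
  simp [st]

/-- the `n`-point function of a word -/
noncomputable def FF (opAt : (E →L[ℂ] E) → h → h → (H →L[ℂ] H)) (W : E →L[ℂ] E) (w : ι → h) (Ω : H)
    (l : List (ι × ι × Bool)) : ℂ :=
  ⟪Ω, ((l.map (opOf opAt W w)).prod) Ω⟫

/-- folded word -/
def fw (p : ι × ι × Bool) (l : List (ι × ι × Bool)) (δ : Bool) : List (ι × ι × Bool) :=
  ((l.map st).reverse) ++ (p.2.1, p.2.1, δ) :: l

lemma fw_length (p : ι × ι × Bool) (l : List (ι × ι × Bool)) (δ : Bool) :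
    (fw p l δ).length = 2 * l.length + 1 := by
  simp [fw]; omega

variable (tmul : h →ₗ[ℂ] H →ₗ[ℂ] E)
  (opAt : (E →L[ℂ] E) → h → h → (H →L[ℂ] H))
  (W : E →L[ℂ] E) (w : ι → h) (Ω : H)

lemma opOf_norm_le
    (htmul : ∀ (u v : h) (ξ ζ : H), ⟪tmul u ξ, tmul v ζ⟫ = ⟪u, v⟫ * ⟪ξ, ζ⟫)
    (hopAt : ∀ (A : E →L[ℂ] E) (u v : h) (ξ₁ ξ₂ : H),
      ⟪ξ₁, opAt A u v ξ₂⟫ = ⟪tmul u ξ₁, A (tmul v ξ₂)⟫)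
    (hW1 : adjoint W * W = 1) (hW2 : W * adjoint W = 1)
    (hw : ∀ i, ‖w i‖ ≤ 1 / 2) (p : ι × ι × Bool) :
    ‖opOf opAt W w p‖ ≤ 1 / 2 := by
  calc ‖opOf opAt W w p‖ ≤ ‖dop W p.2.2‖ * ‖w p.1‖ * ‖w p.2.1‖ :=
        opAt_norm_le tmul htmul opAt hopAt _ _ _
    _ ≤ 2 * (1 / 2) * (1 / 2) := by
        have h1 := dop_norm_le W hW1 hW2 p.2.2
        have h2 := hw p.1
        have h3 := hw p.2.1
        have k1 : ‖w p.1‖ * ‖w p.2.1‖ ≤ (1 / 2) * (1 / 2) :=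
          mul_le_mul h2 h3 (norm_nonneg _) (by norm_num)
        have k2 : ‖dop W p.2.2‖ * (‖w p.1‖ * ‖w p.2.1‖) ≤ 2 * ((1 / 2) * (1 / 2)) :=
          mul_le_mul h1 k1 (by positivity) (by norm_num)
        calc ‖dop W p.2.2‖ * ‖w p.1‖ * ‖w p.2.1‖
            = ‖dop W p.2.2‖ * (‖w p.1‖ * ‖w p.2.1‖) := by ring
          _ ≤ 2 * ((1 / 2) * (1 / 2)) := k2
          _ = 2 * (1 / 2) * (1 / 2) := by ring
    _ = 1 / 2 := by norm_num

lemma prod_norm_le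
    (htmul : ∀ (u v : h) (ξ ζ : H), ⟪tmul u ξ, tmul v ζ⟫ = ⟪u, v⟫ * ⟪ξ, ζ⟫)
    (hopAt : ∀ (A : E →L[ℂ] E) (u v : h) (ξ₁ ξ₂ : H),
      ⟪ξ₁, opAt A u v ξ₂⟫ = ⟪tmul u ξ₁, A (tmul v ξ₂)⟫)
    (hW1 : adjoint W * W = 1) (hW2 : W * adjoint W = 1)
    (hw : ∀ i, ‖w i‖ ≤ 1 / 2) :
    ∀ l : List (ι × ι × Bool), ‖(l.map (opOf opAt W w)).prod‖ ≤ 1 := by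
  intro l
  induction l with
  | nil =>
      simp only [List.map_nil, List.prod_nil]
      rw [ContinuousLinearMap.one_def]; exact norm_id_le
  | cons p l ih =>
      simp only [List.map_cons, List.prod_cons]
      calc ‖opOf opAt W w p * (l.map (opOf opAt W w)).prod‖
          ≤ ‖opOf opAt W w p‖ * ‖(l.map (opOf opAt W w)).prod‖ := norm_mul_le _ _
        _ ≤ (1 / 2) * 1 := by
            apply mul_le_mul (opOf_norm_le tmul opAt W w htmul hopAt hW1 hW2 hw p) ih
              (norm_nonneg _) (by norm_num)
        _ ≤ 1 := by norm_num

lemma opOf_adjoint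
    (hopAt : ∀ (A : E →L[ℂ] E) (u v : h) (ξ₁ ξ₂ : H),
      ⟪ξ₁, opAt A u v ξ₂⟫ = ⟪tmul u ξ₁, A (tmul v ξ₂)⟫)
    (p : ι × ι × Bool) :
    adjoint (opOf opAt W w p) = opOf opAt W w (st p) := by
  show adjoint (opAt (dop W p.2.2) (w p.1) (w p.2.1)) = _
  rw [opAt_adjoint tmul opAt hopAt, dop_adjoint]
  rfl

lemma prod_adjoint
    (hopAt : ∀ (A : E →L[ℂ] E) (u v : h) (ξ₁ ξ₂ : H),
      ⟪ξ₁, opAt A u v ξ₂⟫ = ⟪tmul u ξ₁, A (tmul v ξ₂)⟫) :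
    ∀ l : List (ι × ι × Bool),
      adjoint ((l.map (opOf opAt W w)).prod) = (((l.map st).reverse).map (opOf opAt W w)).prod := by
  intro l
  induction l with
  | nil => simp [← star_eq_adjoint]
  | cons p l ih =>
      simp only [List.map_cons, List.prod_cons, List.reverse_cons]
      rw [← star_eq_adjoint, star_mul, star_eq_adjoint, star_eq_adjoint, ih,
        opOf_adjoint tmul opAt W w hopAt]
      rw [List.map_append, List.prod_append]
      simp

lemma fold
    (htmul : ∀ (u v : h) (ξ ζ : H), ⟪tmul u ξ, tmul v ζ⟫ = ⟪u, v⟫ * ⟪ξ, ζ⟫)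
    (hopAt : ∀ (A : E →L[ℂ] E) (u v : h) (ξ₁ ξ₂ : H),
      ⟪ξ₁, opAt A u v ξ₂⟫ = ⟪tmul u ξ₁, A (tmul v ξ₂)⟫)
    (hW1 : adjoint W * W = 1) (hW2 : W * adjoint W = 1)
    (hw : ∀ i, ‖w i‖ ≤ 1 / 2)
    (p : ι × ι × Bool) (l : List (ι × ι × Bool)) :
    ‖(opOf opAt W w p * ((l.map (opOf opAt W w)).prod)) Ω‖ ^ 2
      ≤ (1 / 4) * (‖FF opAt W w Ω (fw p l false)‖ + ‖FF opAt W w Ω (fw p l true)‖) := by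
  set P : H →L[ℂ] H := (l.map (opOf opAt W w)).prod with hP
  set η : H := P Ω with hη
  set x : E := tmul (w p.2.1) η with hx
  have e1 : (opOf opAt W w p * P) Ω = opOf opAt W w p η := rfl
  have step2 : ‖opOf opAt W w p η‖ ≤ ‖w p.1‖ * ‖dop W p.2.2 x‖ :=
    opAt_apply_norm_le tmul htmul opAt hopAt (dop W p.2.2) (w p.1) (w p.2.1) η
  -- step4 : the folded inner products are values of FF
  have step4 : ∀ δ : Bool,
      (⟪η, opOf opAt W w (p.2.1, p.2.1, δ) η⟫ : ℂ) = FF opAt W w Ω (fw p l δ) := by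
    intro δ
    have hfw : ((fw p l δ).map (opOf opAt W w)).prod
        = adjoint P * (opOf opAt W w (p.2.1, p.2.1, δ) * P) := by
      rw [fw, List.map_append, List.prod_append, List.map_cons, List.prod_cons,
        prod_adjoint tmul opAt W w hopAt l]
    rw [FF, hfw]
    have : (adjoint P * (opOf opAt W w (p.2.1, p.2.1, δ) * P)) Ω
        = adjoint P ((opOf opAt W w (p.2.1, p.2.1, δ) * P) Ω) := rfl
    rw [this, adjoint_inner_right]
    rfl
  -- step3 : norm squared identity
  have step3 : ‖dop W p.2.2 x‖ ^ 2
      ≤ ‖FF opAt W w Ω (fw p l false)‖ + ‖FF opAt W w Ω (fw p l true)‖ := by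
    have a1 : ‖dop W p.2.2 x‖ ^ 2 = RCLike.re (⟪dop W p.2.2 x, dop W p.2.2 x⟫ : ℂ) :=
      norm_sq_eq_re_inner (𝕜 := ℂ) _
    have a2 : (⟪dop W p.2.2 x, dop W p.2.2 x⟫ : ℂ)
        = ⟪x, ((dop W (!p.2.2)) * dop W p.2.2) x⟫ := by
      rw [show ((dop W (!p.2.2)) * dop W p.2.2) x = dop W (!p.2.2) (dop W p.2.2 x) from rfl,
        ← dop_adjoint, adjoint_inner_right]
    have a3 : (⟪x, ((dop W (!p.2.2)) * dop W p.2.2) x⟫ : ℂ)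
        = -(⟪x, dop W false x⟫ : ℂ) - ⟪x, dop W true x⟫ := by
      rw [dop_mul W hW1 hW2]
      have : (-(dop W false + dop W true)) x = -(dop W false x) - dop W true x := by
        simp only [ContinuousLinearMap.neg_apply, ContinuousLinearMap.add_apply]
        abel
      rw [this, inner_sub_right, inner_neg_right]
    have a4 : ∀ δ : Bool, (⟪x, dop W δ x⟫ : ℂ) = FF opAt W w Ω (fw p l δ) := by
      intro δ
      rw [← step4 δ]
      exact (hopAt (dop W δ) (w p.2.1) (w p.2.1) η η).symm
    rw [a1, a2, a3, a4 false, a4 true, map_sub, map_neg]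
    have b0 := RCLike.re_le_norm (FF opAt W w Ω (fw p l false))
    have b1 := RCLike.re_le_norm (FF opAt W w Ω (fw p l true))
    have c0 : -RCLike.re (FF opAt W w Ω (fw p l false)) ≤ ‖FF opAt W w Ω (fw p l false)‖ := by
      have := RCLike.re_le_norm (-(FF opAt W w Ω (fw p l false)))
      rwa [map_neg, norm_neg] at this
    have c1 : -RCLike.re (FF opAt W w Ω (fw p l true)) ≤ ‖FF opAt W w Ω (fw p l true)‖ := by
      have := RCLike.re_le_norm (-(FF opAt W w Ω (fw p l true)))
      rwa [map_neg, norm_neg] at this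
    linarith
  rw [e1]
  have hwp := hw p.1
  have h0 : (0:ℝ) ≤ ‖w p.1‖ := norm_nonneg _
  have h1 : (0:ℝ) ≤ ‖dop W p.2.2 x‖ := norm_nonneg _
  have h2 : (0:ℝ) ≤ ‖opOf opAt W w p η‖ := norm_nonneg _
  have k1 : ‖opOf opAt W w p η‖ ^ 2 ≤ (‖w p.1‖ * ‖dop W p.2.2 x‖) ^ 2 :=
    pow_le_pow_left₀ h2 step2 2
  have k3 : ‖w p.1‖ ^ 2 ≤ (1 / 2 : ℝ) ^ 2 := pow_le_pow_left₀ h0 hwp 2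
  have k4 : ‖w p.1‖ ^ 2 * ‖dop W p.2.2 x‖ ^ 2
      ≤ (1 / 2 : ℝ) ^ 2 * (‖FF opAt W w Ω (fw p l false)‖ + ‖FF opAt W w Ω (fw p l true)‖) :=
    mul_le_mul k3 step3 (sq_nonneg _) (by positivity)
  calc ‖opOf opAt W w p η‖ ^ 2 ≤ (‖w p.1‖ * ‖dop W p.2.2 x‖) ^ 2 := k1
    _ = ‖w p.1‖ ^ 2 * ‖dop W p.2.2 x‖ ^ 2 := mul_pow _ _ 2
    _ ≤ (1 / 2 : ℝ) ^ 2 * (‖FF opAt W w Ω (fw p l false)‖ + ‖FF opAt W w Ω (fw p l true)‖) := k4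
    _ = (1 / 4) * (‖FF opAt W w Ω (fw p l false)‖ + ‖FF opAt W w Ω (fw p l true)‖) := by
        norm_num

lemma core [Nonempty ι]
    (htmul : ∀ (u v : h) (ξ ζ : H), ⟪tmul u ξ, tmul v ζ⟫ = ⟪u, v⟫ * ⟪ξ, ζ⟫)
    (hopAt : ∀ (A : E →L[ℂ] E) (u v : h) (ξ₁ ξ₂ : H),
      ⟪ξ₁, opAt A u v ξ₂⟫ = ⟪tmul u ξ₁, A (tmul v ξ₂)⟫)
    (hΩ : ‖Ω‖ = 1)
    (hW1 : adjoint W * W = 1) (hW2 : W * adjoint W = 1)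
    (hw : ∀ i, ‖w i‖ ≤ 1 / 2)
    (Sig : ℝ) (hSig0 : 0 ≤ Sig)
    (h3 : ∀ a b c : ι × ι × Bool, ‖FF opAt W w Ω [a, b, c]‖ ≤ Sig) :
    ∀ l : List (ι × ι × Bool), 3 ≤ l.length →
      ‖FF opAt W w Ω l‖ ≤ Sig := by
  classical
  have hFFle1 : ∀ l : List (ι × ι × Bool), ‖FF opAt W w Ω l‖ ≤ 1 := by
    intro l
    calc ‖FF opAt W w Ω l‖ ≤ ‖Ω‖ * ‖((l.map (opOf opAt W w)).prod) Ω‖ :=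
          norm_inner_le_norm _ _
      _ ≤ ‖Ω‖ * (‖(l.map (opOf opAt W w)).prod‖ * ‖Ω‖) := by
          apply mul_le_mul_of_nonneg_left (ContinuousLinearMap.le_opNorm _ _) (norm_nonneg _)
      _ ≤ 1 * (1 * 1) := by
          rw [hΩ]
          have := prod_norm_le tmul opAt W w htmul hopAt hW1 hW2 hw l
          nlinarith
      _ = 1 := by norm_num
  obtain ⟨i0⟩ := (inferInstance : Nonempty ι)
  set e0 : ι × ι × Bool := (i0, i0, false) with he0
  set S : Set ℝ := {r | ∃ l : List (ι × ι × Bool), 3 ≤ l.length ∧ r = ‖FF opAt W w Ω l‖}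
    with hS
  have hSne : S.Nonempty := ⟨‖FF opAt W w Ω [e0, e0, e0]‖, ⟨[e0, e0, e0], by simp, rfl⟩⟩
  have hSbdd : BddAbove S := by
    refine ⟨1, ?_⟩
    rintro r ⟨l, -, rfl⟩
    exact hFFle1 l
  set q : ℝ := sSup S with hqdef
  have hq_mem_le : ∀ l : List (ι × ι × Bool), 3 ≤ l.length → ‖FF opAt W w Ω l‖ ≤ q :=
    fun l hl => le_csSup hSbdd ⟨l, hl, rfl⟩
  have hq0 : 0 ≤ q := le_trans (norm_nonneg _) (hq_mem_le [e0, e0, e0] (by simp))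
  have hmain : ∀ l : List (ι × ι × Bool), 4 ≤ l.length →
      ‖FF opAt W w Ω l‖ ^ 2 ≤ (Sig / 2) * (q / 2) := by
    intro l hl
    rcases l with _ | ⟨a, l⟩; · simp at hl
    rcases l with _ | ⟨b, l⟩; · simp at hl
    rcases l with _ | ⟨c, l⟩; · simp at hl
    rcases l with _ | ⟨d, l₃⟩; · simp at hl
    set op := opOf opAt W w with hop
    set Pr : H →L[ℂ] H := ((c :: d :: l₃).map op).prod with hPr
    have e1 : FF opAt W w Ω (a :: b :: c :: d :: l₃) = ⟪op (st b) (op (st a) Ω), Pr Ω⟫ := by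
      rw [FF]
      simp only [List.map_cons, List.prod_cons, ← hop]
      rw [show (op a * (op b * ((op c * (op d * ((l₃.map op).prod)))))) Ω
            = op a (op b (Pr Ω)) by simp [hPr, ContinuousLinearMap.mul_apply]]
      rw [← adjoint_inner_left, ← adjoint_inner_left,
        opOf_adjoint tmul opAt W w hopAt, opOf_adjoint tmul opAt W w hopAt]
    have hleft : op (st b) (op (st a) Ω) = (op (st b) * (([st a]).map op).prod) Ω := by
      simp [ContinuousLinearMap.mul_apply]
    have hT1 : ‖op (st b) (op (st a) Ω)‖ ^ 2 ≤ Sig / 2 := by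
      rw [hleft]
      refine le_trans (fold tmul opAt W w Ω htmul hopAt hW1 hW2 hw (st b) [st a]) ?_
      have hfw : ∀ δ : Bool, fw (st b) [st a] δ = [a, ((st b).2.1, (st b).2.1, δ), st a] := by
        intro δ
        simp [fw, st_st]
      rw [hfw false, hfw true]
      have k0 := h3 a ((st b).2.1, (st b).2.1, false) (st a)
      have k1 := h3 a ((st b).2.1, (st b).2.1, true) (st a)
      linarith
    have hT2 : ‖Pr Ω‖ ^ 2 ≤ q / 2 := by
      have hPr2 : Pr = op c * (((d :: l₃).map op).prod) := by
        simp [hPr]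
      rw [hPr2]
      refine le_trans (fold tmul opAt W w Ω htmul hopAt hW1 hW2 hw c (d :: l₃)) ?_
      have hlen : ∀ δ : Bool, 3 ≤ (fw c (d :: l₃) δ).length := by
        intro δ
        rw [fw_length]
        simp only [List.length_cons]
        omega
      have k0 := hq_mem_le _ (hlen false)
      have k1 := hq_mem_le _ (hlen true)
      linarith
    rw [e1]
    have b1 : ‖(⟪op (st b) (op (st a) Ω), Pr Ω⟫ : ℂ)‖ ≤ ‖op (st b) (op (st a) Ω)‖ * ‖Pr Ω‖ :=
      norm_inner_le_norm _ _
    have b2 : ‖(⟪op (st b) (op (st a) Ω), Pr Ω⟫ : ℂ)‖ ^ 2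
        ≤ (‖op (st b) (op (st a) Ω)‖ * ‖Pr Ω‖) ^ 2 :=
      pow_le_pow_left₀ (norm_nonneg _) b1 2
    calc ‖(⟪op (st b) (op (st a) Ω), Pr Ω⟫ : ℂ)‖ ^ 2
        ≤ (‖op (st b) (op (st a) Ω)‖ * ‖Pr Ω‖) ^ 2 := b2
      _ = ‖op (st b) (op (st a) Ω)‖ ^ 2 * ‖Pr Ω‖ ^ 2 := mul_pow _ _ 2
      _ ≤ (Sig / 2) * (q / 2) := by
          apply mul_le_mul hT1 hT2 (sq_nonneg _) (by linarith)
  have hq_le_Sig : q ≤ Sig := by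
    by_contra hcon
    push_neg at hcon
    have hqmax : q ≤ max Sig (Real.sqrt ((Sig / 2) * (q / 2))) := by
      apply csSup_le hSne
      rintro r ⟨l, hl, rfl⟩
      rcases eq_or_lt_of_le hl with h3len | h4len
      · rcases l with _ | ⟨a, l⟩; · simp at h3len
        rcases l with _ | ⟨b, l⟩; · simp at h3len
        rcases l with _ | ⟨c, l⟩; · simp at h3len
        rcases l with _ | ⟨d, l₃⟩
        · exact le_max_of_le_left (h3 a b c)
        · simp at h3len
      · have hm := hmain l (by omega)
        have : ‖FF opAt W w Ω l‖ ≤ Real.sqrt ((Sig / 2) * (q / 2)) := by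
          rw [Real.le_sqrt (norm_nonneg _) (by nlinarith)]
          exact hm
        exact le_max_of_le_right this
    have h1 : q ≤ Real.sqrt ((Sig / 2) * (q / 2)) :=
      (le_max_iff.mp hqmax).resolve_left (not_le.mpr hcon)
    have h2 : q ^ 2 ≤ (Sig / 2) * (q / 2) := by
      rw [← Real.le_sqrt hq0 (by nlinarith)]
      exact h1
    nlinarith
  exact fun l hl => le_trans (hq_mem_le l hl) hq_le_Sig

lemma prod_ofFn_smul (a : ℂ) :
    ∀ (m : ℕ) (X : Fin m → (H →L[ℂ] H)),
      (List.ofFn fun i => a • X i).prod = a ^ m • (List.ofFn X).prod := by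
  intro m
  induction m with
  | zero => intro X; simp
  | succ k ih =>
      intro X
      rw [List.ofFn_succ, List.ofFn_succ (f := X), List.prod_cons, List.prod_cons,
        ih (fun i => X i.succ), smul_mul_smul_comm, pow_succ']


lemma triple_le_sum {κ : Type*} [Fintype κ] (g : κ × κ × κ → ℝ) (hg : ∀ p, 0 ≤ g p)
    (x y z : κ) : g (x, y, z) ≤ ∑ p : κ × κ × κ, g p :=
  Finset.single_le_sum (f := g) (fun _ _ => hg _) (Finset.mem_univ (x, y, z))

lemma tendstoFF {ι : Type*} [Fintype ι] [Nonempty ι]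
    (tmul : h →ₗ[ℂ] H →ₗ[ℂ] E)
    (htmul : ∀ (u v : h) (ξ ζ : H), ⟪tmul u ξ, tmul v ζ⟫ = ⟪u, v⟫ * ⟪ξ, ζ⟫)
    (opAt : (E →L[ℂ] E) → h → h → (H →L[ℂ] H))
    (hopAt : ∀ (A : E →L[ℂ] E) (u v : h) (ξ₁ ξ₂ : H),
      ⟪ξ₁, opAt A u v ξ₂⟫ = ⟪tmul u ξ₁, A (tmul v ξ₂)⟫)
    (Ω : H) (hΩ : ‖Ω‖ = 1)
    (U : ℝ → (E →L[ℂ] E))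
    (hUunitary : ∀ t : ℝ, 0 ≤ t → adjoint (U t) * U t = 1 ∧ U t * adjoint (U t) = 1)
    (hC : ∀ (u₁ v₁ u₂ v₂ u₃ v₃ : h) (ε₁ ε₂ ε₃ : Bool),
      Filter.Tendsto (fun t : ℝ => (1 / t) *
          ⟪Ω, ((opAt ((if ε₁ then adjoint (U t) else U t) - 1) u₁ v₁) *
               (opAt ((if ε₂ then adjoint (U t) else U t) - 1) u₂ v₂) *
               (opAt ((if ε₃ then adjoint (U t) else U t) - 1) u₃ v₃)) Ω⟫)
        (nhdsWithin 0 (Set.Ioi 0)) (nhds 0))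
    (w : ι → h) (hwb : ∀ p : ι, ‖w p‖ ≤ 1 / 2)
    (l : List (ι × ι × Bool)) (hl : 3 ≤ l.length) :
    Filter.Tendsto (fun t : ℝ => (1 / (t:ℂ)) * FF opAt (U t) w Ω l)
      (nhdsWithin 0 (Set.Ioi 0)) (nhds 0) := by
  obtain ⟨Sig, hSigdef⟩ : ∃ S : ℝ → ℝ, S = fun t : ℝ =>
      ∑ x : (ι × ι × Bool) × (ι × ι × Bool) × (ι × ι × Bool),
        ‖FF opAt (U t) w Ω [x.1, x.2.1, x.2.2]‖ := ⟨_, rfl⟩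
  have hSig0 : ∀ t : ℝ, (0:ℝ) ≤ Sig t := by
    intro t
    rw [hSigdef]
    exact Finset.sum_nonneg fun _ _ => norm_nonneg _
  have hSig3 : ∀ (t : ℝ) (x y z : ι × ι × Bool),
      ‖FF opAt (U t) w Ω [x, y, z]‖ ≤ Sig t := by
    intro t x y z
    simp only [hSigdef]
    exact triple_le_sum
      (fun p : (ι × ι × Bool) × (ι × ι × Bool) × (ι × ι × Bool) =>
        ‖FF opAt (U t) w Ω [p.1, p.2.1, p.2.2]‖)
      (fun _ => norm_nonneg _) x y z
  rw [tendsto_zero_iff_norm_tendsto_zero]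
  apply squeeze_zero' (g := fun t : ℝ => ‖(1 / (t:ℂ))‖ * Sig t)
  · exact Filter.Eventually.of_forall fun t => norm_nonneg _
  · filter_upwards [eventually_mem_nhdsWithin] with t ht
    have hWt := hUunitary t (le_of_lt ht)
    have hcore := core tmul opAt (U t) w Ω htmul hopAt hΩ hWt.1 hWt.2 hwb
      (Sig t) (hSig0 t) (hSig3 t) l hl
    calc ‖(1 / (t:ℂ)) * FF opAt (U t) w Ω l‖
        = ‖(1 / (t:ℂ))‖ * ‖FF opAt (U t) w Ω l‖ := norm_mul _ _
      _ ≤ ‖(1 / (t:ℂ))‖ * Sig t := mul_le_mul_of_nonneg_left hcore (norm_nonneg _)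
  · have heq : (fun t : ℝ => ‖(1 / (t:ℂ))‖ * Sig t)
        = fun t : ℝ => ∑ x : (ι × ι × Bool) × (ι × ι × Bool) × (ι × ι × Bool),
            ‖(1 / (t:ℂ)) * FF opAt (U t) w Ω [x.1, x.2.1, x.2.2]‖ := by
      rw [hSigdef]
      funext t
      rw [Finset.mul_sum]
      exact Finset.sum_congr rfl fun x _ => (norm_mul _ _).symm
    rw [heq]
    have hfin : Filter.Tendsto (fun t : ℝ =>
        ∑ x : (ι × ι × Bool) × (ι × ι × Bool) × (ι × ι × Bool),
          ‖(1 / (t:ℂ)) * FF opAt (U t) w Ω [x.1, x.2.1, x.2.2]‖)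
        (nhdsWithin 0 (Set.Ioi 0))
        (nhds (∑ _x : (ι × ι × Bool) × (ι × ι × Bool) × (ι × ι × Bool), (0:ℝ))) := by
      apply tendsto_finset_sum
      intro x _
      have hx := hC (w x.1.1) (w x.1.2.1) (w x.2.1.1) (w x.2.1.2.1) (w x.2.2.1) (w x.2.2.2.1)
        (x.1.2.2) (x.2.1.2.2) (x.2.2.2.2)
      have heq2 : ∀ t : ℝ,
          (1 / (t:ℂ)) * ⟪Ω, ((opAt ((if x.1.2.2 then adjoint (U t) else U t) - 1) (w x.1.1) (w x.1.2.1)) *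
               (opAt ((if x.2.1.2.2 then adjoint (U t) else U t) - 1) (w x.2.1.1) (w x.2.1.2.1)) *
               (opAt ((if x.2.2.2.2 then adjoint (U t) else U t) - 1) (w x.2.2.1) (w x.2.2.2.1))) Ω⟫
            = (1 / (t:ℂ)) * FF opAt (U t) w Ω [x.1, x.2.1, x.2.2] := by
        intro t
        congr 1
      have hx2 : Filter.Tendsto
          (fun t : ℝ => (1 / (t:ℂ)) * FF opAt (U t) w Ω [x.1, x.2.1, x.2.2])
          (nhdsWithin 0 (Set.Ioi 0)) (nhds 0) :=
        Filter.Tendsto.congr heq2 hx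
      exact tendsto_zero_iff_norm_tendsto_zero.mp hx2
    simpa using hfin

end Words
end Stmt14


open scoped ComplexInnerProductSpace
open ContinuousLinearMap Filter

theorem stmt14
    {h H E : Type*}
    [NormedAddCommGroup h] [InnerProductSpace ℂ h] [CompleteSpace h]
    [TopologicalSpace.SeparableSpace h]
    [NormedAddCommGroup H] [InnerProductSpace ℂ H] [CompleteSpace H]
    [TopologicalSpace.SeparableSpace H]
    [NormedAddCommGroup E] [InnerProductSpace ℂ E] [CompleteSpace E]
    (tmul : h →ₗ[ℂ] H →ₗ[ℂ] E)
    (htmul : ∀ (u v : h) (ξ ζ : H), ⟪tmul u ξ, tmul v ζ⟫ = ⟪u, v⟫ * ⟪ξ, ζ⟫)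
    (hdense : (Submodule.span ℂ (Set.range fun p : h × H => tmul p.1 p.2)).topologicalClosure = ⊤)
    (opAt : (E →L[ℂ] E) → h → h → (H →L[ℂ] H))
    (hopAt : ∀ (A : E →L[ℂ] E) (u v : h) (ξ₁ ξ₂ : H),
      ⟪ξ₁, opAt A u v ξ₂⟫ = ⟪tmul u ξ₁, A (tmul v ξ₂)⟫)
    (Ω : H) (hΩ : ‖Ω‖ = 1)
    (U : ℝ → (E →L[ℂ] E))
    (hUunitary : ∀ t : ℝ, 0 ≤ t → adjoint (U t) * U t = 1 ∧ U t * adjoint (U t) = 1)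
    -- (C) Gaussian condition
    (hC : ∀ (u₁ v₁ u₂ v₂ u₃ v₃ : h) (ε₁ ε₂ ε₃ : Bool),
      Tendsto (fun t : ℝ => (1 / t) *
          ⟪Ω, ((opAt ((if ε₁ then adjoint (U t) else U t) - 1) u₁ v₁) *
               (opAt ((if ε₂ then adjoint (U t) else U t) - 1) u₂ v₂) *
               (opAt ((if ε₃ then adjoint (U t) else U t) - 1) u₃ v₃)) Ω⟫)
        (nhdsWithin 0 (Set.Ioi 0)) (nhds 0))
    (n : ℕ) (hn : 3 ≤ n)
    (u v : Fin n → h) (ε : Fin n → Bool) :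
    Tendsto (fun t : ℝ => (1 / t) *
        ⟪Ω, ((List.ofFn fun i =>
            opAt ((if ε i then adjoint (U t) else U t) - 1) (u i) (v i)).prod) Ω⟫)
      (nhdsWithin 0 (Set.Ioi 0)) (nhds 0) := by
  classical
  -- scaling
  have hsum0 : (0:ℝ) ≤ ∑ i : Fin n, (‖u i‖ + ‖v i‖) :=
    Finset.sum_nonneg fun _ _ => by positivity
  set N : ℝ := 1 + ∑ i : Fin n, (‖u i‖ + ‖v i‖) with hN
  have hNpos : 0 < N := by rw [hN]; linarith
  have hNormLe : ∀ i : Fin n, ‖u i‖ ≤ N ∧ ‖v i‖ ≤ N := by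
    intro i
    have hb : ‖u i‖ + ‖v i‖ ≤ ∑ j : Fin n, (‖u j‖ + ‖v j‖) :=
      Finset.single_le_sum (f := fun j : Fin n => ‖u j‖ + ‖v j‖)
        (fun _ _ => by positivity) (Finset.mem_univ i)
    constructor
    · have := norm_nonneg (v i); rw [hN]; linarith
    · have := norm_nonneg (u i); rw [hN]; linarith
  set c : ℝ := (2 * N)⁻¹ with hc
  have hc0 : 0 < c := by rw [hc]; positivity
  have hcN : c * N = 1 / 2 := by
    rw [hc]; field_simp
  set w : (Fin n ⊕ Fin n) → h :=
    Sum.elim (fun i => (c : ℂ) • u i) (fun i => (c : ℂ) • v i) with hwdef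
  have hwb : ∀ p : Fin n ⊕ Fin n, ‖w p‖ ≤ 1 / 2 := by
    intro p
    cases p with
    | inl i =>
        rw [hwdef]
        simp only [Sum.elim_inl]
        rw [norm_smul, Complex.norm_real, Real.norm_eq_abs, abs_of_pos hc0]
        calc c * ‖u i‖ ≤ c * N := by
              apply mul_le_mul_of_nonneg_left (hNormLe i).1 (le_of_lt hc0)
          _ = 1 / 2 := hcN
    | inr i =>
        rw [hwdef]
        simp only [Sum.elim_inr]
        rw [norm_smul, Complex.norm_real, Real.norm_eq_abs, abs_of_pos hc0]
        calc c * ‖v i‖ ≤ c * N := by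
              apply mul_le_mul_of_nonneg_left (hNormLe i).2 (le_of_lt hc0)
          _ = 1 / 2 := hcN
  haveI : Nonempty (Fin n ⊕ Fin n) := ⟨Sum.inl ⟨0, by omega⟩⟩
  set a : ℂ := (((c : ℂ)) ^ 2)⁻¹ with ha
  set mainword : List ((Fin n ⊕ Fin n) × (Fin n ⊕ Fin n) × Bool) :=
    List.ofFn (fun i : Fin n => ((Sum.inl i : Fin n ⊕ Fin n), (Sum.inr i : Fin n ⊕ Fin n), ε i))
    with hmw
  have hmwlen : mainword.length = n := by rw [hmw]; exact List.length_ofFn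
  -- pointwise rewriting of the product
  have hpoint : ∀ t : ℝ,
      (List.ofFn fun i =>
          opAt ((if ε i then adjoint (U t) else U t) - 1) (u i) (v i)).prod
        = a ^ n • ((mainword.map (Stmt14.opOf opAt (U t) w)).prod) := by
    intro t
    have hmap : mainword.map (Stmt14.opOf opAt (U t) w)
        = List.ofFn (fun i : Fin n =>
            Stmt14.opOf opAt (U t) w ((Sum.inl i, Sum.inr i, ε i))) := by
      rw [hmw, List.map_ofFn]; rfl
    have hfac : (fun i : Fin n =>
          opAt ((if ε i then adjoint (U t) else U t) - 1) (u i) (v i))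
        = fun i : Fin n =>
            a • Stmt14.opOf opAt (U t) w ((Sum.inl i, Sum.inr i, ε i)) := by
      funext i
      have h1 : Stmt14.opOf opAt (U t) w ((Sum.inl i, Sum.inr i, ε i))
          = opAt (Stmt14.dop (U t) (ε i)) ((c : ℂ) • u i) ((c : ℂ) • v i) := rfl
      rw [h1, Stmt14.opAt_smul tmul opAt hopAt, smul_smul, ha,
        inv_mul_cancel₀ (pow_ne_zero 2 (Complex.ofReal_ne_zero.mpr (ne_of_gt hc0))), one_smul]
      rfl
    rw [hfac, Stmt14.prod_ofFn_smul, hmap]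
  have hfun : ∀ t : ℝ,
      (1 / t) * ⟪Ω, ((List.ofFn fun i =>
          opAt ((if ε i then adjoint (U t) else U t) - 1) (u i) (v i)).prod) Ω⟫
        = a ^ n * ((1 / t) * Stmt14.FF opAt (U t) w Ω mainword) := by
    intro t
    rw [hpoint t, ContinuousLinearMap.smul_apply, inner_smul_right, Stmt14.FF]
    ring
  suffices hT : Tendsto
      (fun t : ℝ => (1 / t) * Stmt14.FF opAt (U t) w Ω mainword)
      (nhdsWithin 0 (Set.Ioi 0)) (nhds 0) by
    have h2 : Tendsto
        (fun t : ℝ => a ^ n * ((1 / t) * Stmt14.FF opAt (U t) w Ω mainword))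
        (nhdsWithin 0 (Set.Ioi 0)) (nhds 0) := by
      simpa using hT.const_mul (a ^ n)
    exact Tendsto.congr (fun t => (hfun t).symm) h2
  exact Stmt14.tendstoFF tmul htmul opAt hopAt Ω hΩ U hUunitary hC w hwb mainword
    (by rw [hmwlen]; exact hn)
end

section
/- Assume each U_t is unitary and Assumption C holds. Then for all u, v, p, w ∈ h and all ε, ε′ ∈ {0,1}: lim_{t→0} (1/t)·‖(U_t^{(ε)} − 1)(u,v)·(U_t^{(ε′)} − 1)(p,w)·Ω‖² = 0. -/
set_option maxHeartbeats 1000000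


/-!
STATEMENT 15: Assume each `U_t` is unitary and the Gaussian condition (Assumption C)
holds.  Then for all `u v p w ∈ h` and `ε, ε' ∈ {0,1}`:
`lim_{t→0⁺} (1/t)·‖(U_t^{(ε)}−1)(u,v)·(U_t^{(ε')}−1)(p,w)·Ω‖² = 0`.

Modelling: `E` models `h ⊗ H` (map `tmul`), `opAt` gives `A(u,v)` on `H`; `ε = true`
means `ε = 1` and `U_t^{(ε)} = U_t*`.
-/

open scoped ComplexInnerProductSpace
open ContinuousLinearMap Filter

theorem stmt15
    {h H E : Type*}
    [NormedAddCommGroup h] [InnerProductSpace ℂ h] [CompleteSpace h]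
    [TopologicalSpace.SeparableSpace h]
    [NormedAddCommGroup H] [InnerProductSpace ℂ H] [CompleteSpace H]
    [TopologicalSpace.SeparableSpace H]
    [NormedAddCommGroup E] [InnerProductSpace ℂ E] [CompleteSpace E]
    (tmul : h →ₗ[ℂ] H →ₗ[ℂ] E)
    (htmul : ∀ (u v : h) (ξ ζ : H), ⟪tmul u ξ, tmul v ζ⟫ = ⟪u, v⟫ * ⟪ξ, ζ⟫)
    (hdense : (Submodule.span ℂ (Set.range fun p : h × H => tmul p.1 p.2)).topologicalClosure = ⊤)
    (opAt : (E →L[ℂ] E) → h → h → (H →L[ℂ] H))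
    (hopAt : ∀ (A : E →L[ℂ] E) (u v : h) (ξ₁ ξ₂ : H),
      ⟪ξ₁, opAt A u v ξ₂⟫ = ⟪tmul u ξ₁, A (tmul v ξ₂)⟫)
    (Ω : H) (hΩ : ‖Ω‖ = 1)
    (U : ℝ → (E →L[ℂ] E))
    (hUunitary : ∀ t : ℝ, 0 ≤ t → adjoint (U t) * U t = 1 ∧ U t * adjoint (U t) = 1)
    -- (C) Gaussian condition
    (hC : ∀ (u₁ v₁ u₂ v₂ u₃ v₃ : h) (ε₁ ε₂ ε₃ : Bool),
      Tendsto (fun t : ℝ => (1 / t) *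
          ⟪Ω, ((opAt ((if ε₁ then adjoint (U t) else U t) - 1) u₁ v₁) *
               (opAt ((if ε₂ then adjoint (U t) else U t) - 1) u₂ v₂) *
               (opAt ((if ε₃ then adjoint (U t) else U t) - 1) u₃ v₃)) Ω⟫)
        (nhdsWithin 0 (Set.Ioi 0)) (nhds 0))
    (u v p w : h) (ε ε' : Bool) :
    Tendsto (fun t : ℝ => (1 / t) *
        ‖((opAt ((if ε then adjoint (U t) else U t) - 1) u v) *
          (opAt ((if ε' then adjoint (U t) else U t) - 1) p w)) Ω‖ ^ 2)
      (nhdsWithin 0 (Set.Ioi 0)) (nhds 0) := by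
  -- norm of tmul
  have hnt : ∀ (a : h) (η : H), ‖tmul a η‖ = ‖a‖ * ‖η‖ := by
    intro a η
    have h2 := htmul a a η η
    have h3 : (‖tmul a η‖)^2 = (‖a‖ * ‖η‖)^2 := by
      have e1 : (⟪tmul a η, tmul a η⟫ : ℂ).re = ‖tmul a η‖^2 := by
        have := inner_self_eq_norm_sq (𝕜 := ℂ) (tmul a η); simpa using this
      have e2 : (⟪a, a⟫ : ℂ).re = ‖a‖^2 := by
        have := inner_self_eq_norm_sq (𝕜 := ℂ) a; simpa using this
      have e3 : (⟪η, η⟫ : ℂ).re = ‖η‖^2 := by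
        have := inner_self_eq_norm_sq (𝕜 := ℂ) η; simpa using this
      have e4 : (⟪a, a⟫ : ℂ).im = 0 := by
        have := inner_self_im (𝕜 := ℂ) a; rwa [RCLike.im_to_complex] at this
      have e5 := congrArg Complex.re h2
      rw [e1, Complex.mul_re, e2, e3, e4] at e5
      rw [e5]; ring
    nlinarith [norm_nonneg (tmul a η), mul_nonneg (norm_nonneg a) (norm_nonneg η)]
  -- adjoint move: ⟪opAt Y p w ξ₁, ζ⟫ = ⟪ξ₁, opAt (adjoint Y) w p ζ⟫
  have hadj : ∀ (Y : E →L[ℂ] E) (a b : h) (ξ₁ ζ : H),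
      ⟪opAt Y a b ξ₁, ζ⟫ = ⟪ξ₁, opAt (adjoint Y) b a ζ⟫ := by
    intro Y a b ξ₁ ζ
    have := hopAt Y a b ζ ξ₁
    calc ⟪opAt Y a b ξ₁, ζ⟫ = (starRingEnd ℂ) ⟪ζ, opAt Y a b ξ₁⟫ := by rw [← inner_conj_symm]
      _ = (starRingEnd ℂ) ⟪tmul a ζ, Y (tmul b ξ₁)⟫ := by rw [this]
      _ = ⟪Y (tmul b ξ₁), tmul a ζ⟫ := by rw [inner_conj_symm]
      _ = ⟪tmul b ξ₁, adjoint Y (tmul a ζ)⟫ := by rw [adjoint_inner_right]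
      _ = ⟪ξ₁, opAt (adjoint Y) b a ζ⟫ := (hopAt (adjoint Y) b a ξ₁ ζ).symm
  -- key norm bound: ‖opAt X a b ξ‖ ≤ ‖a‖ * ‖X (tmul b ξ)‖
  have hbound : ∀ (X : E →L[ℂ] E) (a b : h) (ξ : H),
      ‖opAt X a b ξ‖ ≤ ‖a‖ * ‖X (tmul b ξ)‖ := by
    intro X a b ξ
    have h1 : (‖opAt X a b ξ‖ : ℝ)^2 = (⟪opAt X a b ξ, opAt X a b ξ⟫ : ℂ).re := by
      have := inner_self_eq_norm_sq (𝕜 := ℂ) (opAt X a b ξ); rw [← this]; simp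
    have h2 : (⟪opAt X a b ξ, opAt X a b ξ⟫ : ℂ)
        = ⟪tmul a (opAt X a b ξ), X (tmul b ξ)⟫ := hopAt X a b (opAt X a b ξ) ξ
    have h3 : ‖opAt X a b ξ‖^2 ≤ ‖a‖ * ‖opAt X a b ξ‖ * ‖X (tmul b ξ)‖ := by
      rw [h1, h2]
      calc (⟪tmul a (opAt X a b ξ), X (tmul b ξ)⟫ : ℂ).re
          ≤ ‖(⟪tmul a (opAt X a b ξ), X (tmul b ξ)⟫ : ℂ)‖ := Complex.re_le_norm _
        _ ≤ ‖tmul a (opAt X a b ξ)‖ * ‖X (tmul b ξ)‖ := norm_inner_le_norm _ _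
        _ = ‖a‖ * ‖opAt X a b ξ‖ * ‖X (tmul b ξ)‖ := by rw [hnt]
    rcases eq_or_lt_of_le (norm_nonneg (opAt X a b ξ)) with h0 | h0
    · rw [← h0]; positivity
    · have := (mul_le_mul_iff_of_pos_right h0).mp (by nlinarith : ‖opAt X a b ξ‖ * ‖opAt X a b ξ‖ ≤ (‖a‖ * ‖X (tmul b ξ)‖) * ‖opAt X a b ξ‖)
      exact this
  -- notation for the operators at time t
  set V : ℝ → (E →L[ℂ] E) := fun t => if ε then adjoint (U t) else U t with hV
  set W : ℝ → (E →L[ℂ] E) := fun t => if ε' then adjoint (U t) else U t with hW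
  have hVadj : ∀ t, adjoint (V t) = if !ε then adjoint (U t) else U t := by
    intro t; cases ε <;> simp [hV, adjoint_adjoint]
  have hWadj : ∀ t, adjoint (W t) = if !ε' then adjoint (U t) else U t := by
    intro t; cases ε' <;> simp [hW, adjoint_adjoint]
  -- the dominating function
  set g : ℝ → ℝ := fun t => ‖u‖^2 *
      (-( (1/t) * ⟪Ω, ((opAt ((if !ε' then adjoint (U t) else U t) - 1) w p) *
                 (opAt ((if ε then adjoint (U t) else U t) - 1) v v) *
                 (opAt ((if ε' then adjoint (U t) else U t) - 1) p w)) Ω⟫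
        + (1/t) * ⟪Ω, ((opAt ((if !ε' then adjoint (U t) else U t) - 1) w p) *
                 (opAt ((if !ε then adjoint (U t) else U t) - 1) v v) *
                 (opAt ((if ε' then adjoint (U t) else U t) - 1) p w)) Ω⟫)).re with hg
  -- g tends to 0
  have hg0 : Tendsto g (nhdsWithin 0 (Set.Ioi 0)) (nhds 0) := by
    have t1 := hC w p v v p w (!ε') ε ε'
    have t2 := hC w p v v p w (!ε') (!ε) ε'
    have hsum := (t1.add t2).neg
    have hre := (Complex.continuous_re.tendsto _).comp hsum
    have hfin := hre.const_mul (‖u‖^2)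
    rw [hg]
    simpa [Function.comp] using hfin
  -- squeeze
  refine tendsto_of_tendsto_of_tendsto_of_le_of_le' tendsto_const_nhds hg0 ?_ ?_
  · filter_upwards [self_mem_nhdsWithin] with t ht
    have ht' : (0:ℝ) < t := ht
    have : (0:ℝ) ≤ 1/t := le_of_lt (by positivity)
    positivity
  · filter_upwards [self_mem_nhdsWithin] with t ht
    have ht' : (0:ℝ) < t := ht
    -- abbreviations
    set Xt : E →L[ℂ] E := (if ε then adjoint (U t) else U t) - 1 with hXt
    set Yt : E →L[ℂ] E := (if ε' then adjoint (U t) else U t) - 1 with hYt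
    set A : H →L[ℂ] H := opAt Yt p w with hA
    set ξ : H := A Ω with hξ
    have hUV : adjoint (V t) * V t = 1 := by
      cases ε <;> simp [hV, adjoint_adjoint, (hUunitary t ht'.le).1, (hUunitary t ht'.le).2]
    have hXtV : Xt = V t - 1 := by rw [hXt, hV]
    have hadjV : adjoint (V t - 1) = adjoint (V t) - 1 := by
      rw [map_sub]
      congr 1
      simpa [ContinuousLinearMap.one_def] using (adjoint_id (𝕜 := ℂ) (E := E))
    have hone : adjoint (1 : E →L[ℂ] E) = 1 := by
      simpa [ContinuousLinearMap.one_def] using (adjoint_id (𝕜 := ℂ) (E := E))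
    have hadjW : adjoint Yt = (if !ε' then adjoint (U t) else U t) - 1 := by
      rw [hYt, map_sub, hone]
      congr 1
      cases ε' <;> simp [adjoint_adjoint]
    -- operator identity
    have hop : adjoint Xt * Xt = -((V t - 1) + (adjoint (V t) - 1)) := by
      rw [hXtV, hadjV, sub_mul, mul_sub, mul_sub, hUV]
      simp only [mul_one, one_mul]
      abel
    -- norm bound
    have key1 : ‖opAt Xt u v ξ‖ ≤ ‖u‖ * ‖Xt (tmul v ξ)‖ := hbound Xt u v ξ
    have key2 : ‖opAt Xt u v ξ‖^2 ≤ ‖u‖^2 * ‖Xt (tmul v ξ)‖^2 := by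
      nlinarith [norm_nonneg (opAt Xt u v ξ), norm_nonneg (Xt (tmul v ξ)),
        mul_nonneg (norm_nonneg u) (norm_nonneg (Xt (tmul v ξ)))]
    -- quadratic form identity
    have key3 : ‖Xt (tmul v ξ)‖^2
        = (-(⟪tmul v ξ, (V t - 1) (tmul v ξ)⟫ + ⟪tmul v ξ, (adjoint (V t) - 1) (tmul v ξ)⟫) : ℂ).re := by
      have e0 : (⟪Xt (tmul v ξ), Xt (tmul v ξ)⟫ : ℂ).re = ‖Xt (tmul v ξ)‖^2 := by
        have := inner_self_eq_norm_sq (𝕜 := ℂ) (Xt (tmul v ξ)); simpa using this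
      have e1 : (⟪Xt (tmul v ξ), Xt (tmul v ξ)⟫ : ℂ)
          = ⟪tmul v ξ, (adjoint Xt * Xt) (tmul v ξ)⟫ := by
        rw [ContinuousLinearMap.mul_apply, adjoint_inner_right]
      have e2 : (⟪tmul v ξ, (adjoint Xt * Xt) (tmul v ξ)⟫ : ℂ)
          = -(⟪tmul v ξ, (V t - 1) (tmul v ξ)⟫ + ⟪tmul v ξ, (adjoint (V t) - 1) (tmul v ξ)⟫) := by
        rw [hop]
        simp only [ContinuousLinearMap.add_apply, ContinuousLinearMap.neg_apply,
          inner_neg_right, inner_add_right]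
      rw [← e0, e1, e2]
    -- move to vacuum expectation
    have key4 : ∀ Z : E →L[ℂ] E, (⟪tmul v ξ, Z (tmul v ξ)⟫ : ℂ)
        = ⟪Ω, (opAt (adjoint Yt) w p * opAt Z v v * opAt Yt p w) Ω⟫ := by
      intro Z
      have e1 : (⟪tmul v ξ, Z (tmul v ξ)⟫ : ℂ) = ⟪ξ, opAt Z v v ξ⟫ := (hopAt Z v v ξ ξ).symm
      have e2 : (⟪ξ, opAt Z v v ξ⟫ : ℂ) = ⟪Ω, opAt (adjoint Yt) w p (opAt Z v v ξ)⟫ := by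
        rw [hξ, hA]
        exact hadj Yt p w Ω (opAt Z v v (opAt Yt p w Ω))
      rw [e1, e2]
      simp [ContinuousLinearMap.mul_apply, hξ, hA]
    -- rewrite key3 in terms of the explicit `if` expressions
    simp only [hVadj t] at key3
    simp only [hV] at key3
    have hS1 := key4 ((if ε then adjoint (U t) else U t) - 1)
    have hS2 := key4 ((if !ε then adjoint (U t) else U t) - 1)
    rw [hadjW, hYt] at hS1 hS2
    rw [hS1, hS2] at key3
    have hmulapp : (opAt Xt u v * opAt Yt p w) Ω = opAt Xt u v ξ := rfl
    have hcast : ∀ z₁ z₂ : ℂ, (-(1/(t:ℂ) * z₁ + 1/(t:ℂ) * z₂)).re = (1/t) * (-(z₁+z₂)).re := by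
      intro z₁ z₂
      have e : -(1/(t:ℂ) * z₁ + 1/(t:ℂ) * z₂) = ((1/t : ℝ) : ℂ) * (-(z₁+z₂)) := by
        push_cast; ring
      rw [e, Complex.re_ofReal_mul]
    calc 1/t * ‖(opAt Xt u v * opAt Yt p w) Ω‖^2
        = 1/t * ‖opAt Xt u v ξ‖^2 := by rw [hmulapp]
      _ ≤ 1/t * (‖u‖^2 * ‖Xt (tmul v ξ)‖^2) := by
          have h1t : (0:ℝ) ≤ 1/t := by positivity
          exact mul_le_mul_of_nonneg_left key2 h1t
      _ = g t := by
          rw [hg, key3]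
          beta_reduce
          rw [hcast]
          ring
end

section
/- Let h be a complex separable Hilbert space, G a bounded operator on h, and (L_j)_{j≥1} a sequence of bounded operators on h such that for every u ∈ h the series Σ_j ‖L_j u‖² converges and Σ_j ‖L_j u‖² = −⟨u, Gu⟩ − ⟨Gu, u⟩. Then Σ_j L_j* L_j converges strongly to a bounded positive operator with ‖Σ_j L_j* L_j‖ ≤ 2‖G‖, and the operator H := −i·(G + ½·Σ_j L_j* L_j) is a bounded self-adjoint operator on h; equivalently G = iH − ½·Σ_j L_j* L_j with H self-adjoint. -/
/-!
STATEMENT 18: Let `h` be a complex separable Hilbert space, `G` a bounded operator on `h`,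
and `(L_j)` bounded operators with `Σ_j ‖L_j u‖² = −⟨u,Gu⟩ − ⟨Gu,u⟩` (convergent) for all
`u`.  Then `Σ_j L_j*L_j` converges strongly to a positive bounded operator `S` with
`‖S‖ ≤ 2‖G‖`, and `H := −i(G + ½S)` is bounded self-adjoint; equivalently
`G = iH − ½S` with `H` self-adjoint.
-/

open scoped ComplexInnerProductSpace
open ContinuousLinearMap


section Aux
variable {h : Type*} [NormedAddCommGroup h] [InnerProductSpace ℂ h] [CompleteSpace h]


lemma re_flip (x y : h) : (⟪x, y⟫).re = (⟪y, x⟫).re := by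
  rw [← inner_conj_symm y x]; exact Complex.conj_re _

lemma pos_apply_nonneg {P : h →L[ℂ] h} (hP : P.IsPositive) (u : h) :
    0 ≤ (⟪u, P u⟫).re := by
  have := hP.2 u
  rw [reApplyInnerSelf_apply, RCLike.re_to_complex] at this
  rwa [re_flip]

lemma pos_norm_sq_le {P : h →L[ℂ] h} (hP : P.IsPositive) (u : h) :
    ‖P u‖ ^ 2 ≤ ‖P‖ * (⟪u, P u⟫).re := by
  have hsym := hP.1
  by_cases hzero : P u = 0
  · rw [hzero]
    simp
  set v := P u with hv
  have key : ∀ t : ℝ, 0 ≤ (⟪v, P v⟫).re * (t * t) + (-(2 * ‖v‖ ^ 2)) * t + (⟪u, P u⟫).re := by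
    intro t
    have h0 := hP.2 (u - (t : ℂ) • v)
    rw [reApplyInnerSelf_apply, RCLike.re_to_complex] at h0
    have h1 : ⟪P u, v⟫ = ((‖v‖ ^ 2 : ℝ) : ℂ) := by
      rw [← hv]
      simpa using inner_self_eq_norm_sq_to_K (𝕜 := ℂ) v
    have h2 : ⟪P v, u⟫ = ((‖v‖ ^ 2 : ℝ) : ℂ) := by
      have hs : ⟪P v, u⟫ = ⟪v, P u⟫ := by simpa using hsym v u
      rw [hs, ← hv]
      simpa using inner_self_eq_norm_sq_to_K (𝕜 := ℂ) v
    have hc : ⟪P (u - (t:ℂ) • v), u - (t:ℂ) • v⟫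
        = ⟪P u, u⟫ - ((t * ‖v‖ ^ 2 : ℝ) : ℂ) - ((t * ‖v‖ ^ 2 : ℝ) : ℂ)
          + ((t ^ 2 : ℝ) : ℂ) * ⟪P v, v⟫ := by
      simp only [map_sub, map_smul, inner_sub_left, inner_sub_right, inner_smul_left,
        inner_smul_right, Complex.conj_ofReal, h1, h2]
      push_cast
      ring
    have hre2 : (⟪P (u - (t:ℂ) • v), u - (t:ℂ) • v⟫).re
        = (⟪P u, u⟫).re - t * ‖v‖ ^ 2 - t * ‖v‖ ^ 2 + t ^ 2 * (⟪P v, v⟫).re := by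
      rw [hc, Complex.add_re, Complex.sub_re, Complex.sub_re, Complex.ofReal_re,
        Complex.re_ofReal_mul]
    rw [hre2] at h0
    have hreuu : (⟪P u, u⟫).re = (⟪u, P u⟫).re := re_flip _ _
    have hrevv : (⟪P v, v⟫).re = (⟪v, P v⟫).re := re_flip _ _
    rw [hreuu, hrevv] at h0
    nlinarith [h0]
  have hdisc := discrim_le_zero key
  rw [discrim] at hdisc
  have hb2 : (‖v‖ ^ 2) * (‖v‖ ^ 2) ≤ (⟪v, P v⟫).re * (⟪u, P u⟫).re := by nlinarith
  have hPvv : (⟪v, P v⟫).re ≤ ‖P‖ * ‖v‖ ^ 2 := by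
    calc (⟪v, P v⟫).re ≤ ‖⟪v, P v⟫‖ := Complex.re_le_norm _
      _ ≤ ‖v‖ * ‖P v‖ := by simpa using norm_inner_le_norm (𝕜 := ℂ) v (P v)
      _ ≤ ‖v‖ * (‖P‖ * ‖v‖) := by gcongr; exact P.le_opNorm v
      _ = ‖P‖ * ‖v‖ ^ 2 := by ring
  have hupu : 0 ≤ (⟪u, P u⟫).re := pos_apply_nonneg hP u
  have hvpos : 0 < ‖v‖ ^ 2 := pow_pos (norm_pos_iff.mpr hzero) 2
  nlinarith

lemma pos_norm_le {T S : h →L[ℂ] h} (hT : T.IsPositive) (hST : (S - T).IsPositive) :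
    ‖T‖ ≤ ‖S‖ := by
  have key : ∀ u, ‖T u‖ ≤ Real.sqrt (‖T‖ * ‖S‖) * ‖u‖ := by
    intro u
    have h1 := pos_norm_sq_le hT u
    have h2 : (⟪u, T u⟫).re ≤ (⟪u, S u⟫).re := by
      have hn := pos_apply_nonneg hST u
      have he : (⟪u, (S - T) u⟫).re = (⟪u, S u⟫).re - (⟪u, T u⟫).re := by
        simp [ContinuousLinearMap.sub_apply, inner_sub_right, Complex.sub_re]
      rw [he] at hn; linarith
    have h3 : (⟪u, S u⟫).re ≤ ‖S‖ * ‖u‖ ^ 2 := by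
      calc (⟪u, S u⟫).re ≤ ‖⟪u, S u⟫‖ := Complex.re_le_norm _
        _ ≤ ‖u‖ * ‖S u‖ := by simpa using norm_inner_le_norm (𝕜 := ℂ) u (S u)
        _ ≤ ‖u‖ * (‖S‖ * ‖u‖) := by gcongr; exact S.le_opNorm u
        _ = ‖S‖ * ‖u‖ ^ 2 := by ring
    have h4 : ‖T u‖ ^ 2 ≤ (‖T‖ * ‖S‖) * ‖u‖ ^ 2 := by nlinarith [norm_nonneg T]
    calc ‖T u‖ = Real.sqrt (‖T u‖ ^ 2) := (Real.sqrt_sq (norm_nonneg _)).symm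
      _ ≤ Real.sqrt ((‖T‖ * ‖S‖) * ‖u‖ ^ 2) := Real.sqrt_le_sqrt h4
      _ = Real.sqrt (‖T‖ * ‖S‖) * ‖u‖ := by
          rw [Real.sqrt_mul (by positivity), Real.sqrt_sq (norm_nonneg _)]
  have h5 : ‖T‖ ≤ Real.sqrt (‖T‖ * ‖S‖) := T.opNorm_le_bound (Real.sqrt_nonneg _) key
  have h6 : ‖T‖ ^ 2 ≤ ‖T‖ * ‖S‖ := by
    calc ‖T‖ ^ 2 ≤ (Real.sqrt (‖T‖ * ‖S‖)) ^ 2 := by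
          nlinarith [norm_nonneg T, Real.sqrt_nonneg (‖T‖ * ‖S‖)]
      _ = ‖T‖ * ‖S‖ := Real.sq_sqrt (by positivity)
  rcases eq_or_lt_of_le (norm_nonneg T) with hh | hh
  · rw [← hh]; exact norm_nonneg S
  · nlinarith

end Aux

theorem stmt18
    {h : Type*}
    [NormedAddCommGroup h] [InnerProductSpace ℂ h] [CompleteSpace h]
    [TopologicalSpace.SeparableSpace h]
    (G : h →L[ℂ] h) (L : ℕ → (h →L[ℂ] h))
    (hL : ∀ u : h, HasSum (fun j : ℕ => ((‖L j u‖ : ℂ) ^ 2)) (-⟪u, G u⟫ - ⟪G u, u⟫)) :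
    ∃ S Hop : h →L[ℂ] h,
      (∀ u : h, HasSum (fun j : ℕ => (adjoint (L j) * L j) u) (S u)) ∧
      S.IsPositive ∧ ‖S‖ ≤ 2 * ‖G‖ ∧
      Hop = (-Complex.I) • (G + (2⁻¹ : ℂ) • S) ∧
      IsSelfAdjoint Hop ∧
      G = Complex.I • Hop - (2⁻¹ : ℂ) • S := by
  set S : h →L[ℂ] h := -(G + adjoint G) with hSdef
  have hSadj : adjoint S = S := by
    simp [hSdef, map_neg, map_add, adjoint_adjoint, add_comm]
  have hSsa : IsSelfAdjoint S := hSadj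
  have hquad : ∀ u : h, ⟪u, S u⟫ = -⟪u, G u⟫ - ⟪G u, u⟫ := by
    intro u
    simp [hSdef, inner_add_right, inner_neg_right, adjoint_inner_right]
    ring
  -- real sums
  have hsumr : ∀ u : h, HasSum (fun j : ℕ => ‖L j u‖ ^ 2) ((⟪u, S u⟫).re) := by
    intro u
    have h1 := (hL u).mapL Complex.reCLM
    have h2 : (fun j : ℕ => Complex.reCLM ((‖L j u‖ : ℂ) ^ 2)) = fun j => ‖L j u‖ ^ 2 := by
      funext j
      simp [← Complex.ofReal_pow]
    rw [h2] at h1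
    have h3 : Complex.reCLM (-⟪u, G u⟫ - ⟪G u, u⟫) = (⟪u, S u⟫).re := by
      rw [hquad u]; simp
    rwa [h3] at h1
  have hSpos : S.IsPositive := by
    refine ⟨isSelfAdjoint_iff_isSymmetric.mp hSsa, fun u => ?_⟩
    rw [reApplyInnerSelf_apply, RCLike.re_to_complex, re_flip]
    exact (hsumr u).nonneg fun j => sq_nonneg _
  -- partial sum operators
  have hTquadr : ∀ (s : Finset ℕ) (u : h),
      (⟪u, (∑ j ∈ s, adjoint (L j) * L j) u⟫).re = ∑ j ∈ s, ‖L j u‖ ^ 2 := by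
    intro s u
    have : ⟪u, (∑ j ∈ s, adjoint (L j) * L j) u⟫
        = ∑ j ∈ s, ((‖L j u‖ ^ 2 : ℝ) : ℂ) := by
      rw [ContinuousLinearMap.sum_apply, inner_sum]
      refine Finset.sum_congr rfl fun j _ => ?_
      rw [ContinuousLinearMap.mul_apply, adjoint_inner_right]
      simpa using inner_self_eq_norm_sq_to_K (𝕜 := ℂ) (L j u)
    rw [this, ← Complex.ofReal_sum, Complex.ofReal_re]
  have hTpos : ∀ s : Finset ℕ, (∑ j ∈ s, adjoint (L j) * L j).IsPositive := by
    intro s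
    refine Finset.sum_induction _ _ (fun a b ha hb => ha.add hb) isPositive_zero ?_
    intro j _
    have := isPositive_one.adjoint_conj (L j)
    simpa [ContinuousLinearMap.comp_id, ContinuousLinearMap.id_comp, ContinuousLinearMap.one_def,
      ContinuousLinearMap.mul_def] using this
  have hDpos : ∀ s : Finset ℕ, (S - ∑ j ∈ s, adjoint (L j) * L j).IsPositive := by
    intro s
    refine ⟨isSelfAdjoint_iff_isSymmetric.mp (hSsa.sub (hTpos s).isSelfAdjoint), fun u => ?_⟩
    rw [reApplyInnerSelf_apply, RCLike.re_to_complex, re_flip]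
    have he : (⟪u, (S - ∑ j ∈ s, adjoint (L j) * L j) u⟫).re
        = (⟪u, S u⟫).re - ∑ j ∈ s, ‖L j u‖ ^ 2 := by
      rw [ContinuousLinearMap.sub_apply, inner_sub_right, Complex.sub_re, hTquadr]
    rw [he, sub_nonneg]
    exact sum_le_hasSum s (fun j _ => sq_nonneg _) (hsumr u)
  have hTnorm : ∀ s : Finset ℕ, ‖(∑ j ∈ s, adjoint (L j) * L j : h →L[ℂ] h)‖ ≤ ‖S‖ :=
    fun s => pos_norm_le (hTpos s) (hDpos s)
  have hDnorm : ∀ s : Finset ℕ, ‖S - ∑ j ∈ s, adjoint (L j) * L j‖ ≤ 2 * ‖S‖ := by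
    intro s
    calc ‖S - ∑ j ∈ s, adjoint (L j) * L j‖
        ≤ ‖S‖ + ‖(∑ j ∈ s, adjoint (L j) * L j : h →L[ℂ] h)‖ := norm_sub_le _ _
      _ ≤ ‖S‖ + ‖S‖ := by linarith [hTnorm s]
      _ = 2 * ‖S‖ := by ring
  -- strong convergence
  have hSsum : ∀ u : h, HasSum (fun j : ℕ => (adjoint (L j) * L j) u) (S u) := by
    intro u
    rw [HasSum, SummationFilter.unconditional_filter, Metric.tendsto_atTop]
    intro ε hε
    set M := 2 * ‖S‖ + 1 with hM
    have hMpos : 0 < M := by positivity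
    obtain ⟨s₀, hs₀⟩ := Metric.tendsto_atTop.mp (hsumr u) (ε ^ 2 / M) (by positivity)
    refine ⟨s₀, fun s hs => ?_⟩
    have htail : (⟪u, S u⟫).re - ∑ j ∈ s, ‖L j u‖ ^ 2 < ε ^ 2 / M := by
      have := hs₀ s hs
      rw [Real.dist_eq] at this
      have := abs_lt.mp this
      linarith [this.1]
    have htail0 : 0 ≤ (⟪u, S u⟫).re - ∑ j ∈ s, ‖L j u‖ ^ 2 := by
      have := sum_le_hasSum s (fun j _ => sq_nonneg (‖L j u‖)) (hsumr u)
      linarith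
    have hkey : ‖S u - (∑ j ∈ s, adjoint (L j) * L j) u‖ ^ 2 < ε ^ 2 := by
      have h1 := pos_norm_sq_le (hDpos s) u
      have h2 : (⟪u, (S - ∑ j ∈ s, adjoint (L j) * L j) u⟫).re
          = (⟪u, S u⟫).re - ∑ j ∈ s, ‖L j u‖ ^ 2 := by
        rw [ContinuousLinearMap.sub_apply, inner_sub_right, Complex.sub_re, hTquadr]
      rw [h2] at h1
      have h3 : ‖(S - ∑ j ∈ s, adjoint (L j) * L j) u‖ ^ 2
          ≤ M * ((⟪u, S u⟫).re - ∑ j ∈ s, ‖L j u‖ ^ 2) := by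
        calc ‖(S - ∑ j ∈ s, adjoint (L j) * L j) u‖ ^ 2
            ≤ ‖S - ∑ j ∈ s, adjoint (L j) * L j‖
              * ((⟪u, S u⟫).re - ∑ j ∈ s, ‖L j u‖ ^ 2) := h1
          _ ≤ M * ((⟪u, S u⟫).re - ∑ j ∈ s, ‖L j u‖ ^ 2) := by
              apply mul_le_mul_of_nonneg_right _ htail0
              rw [hM]; linarith [hDnorm s]
      have h4 : M * ((⟪u, S u⟫).re - ∑ j ∈ s, ‖L j u‖ ^ 2) < M * (ε ^ 2 / M) :=
        (mul_lt_mul_iff_right₀ hMpos).mpr htail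
      have h5 : M * (ε ^ 2 / M) = ε ^ 2 := by field_simp
      have h6 : (S - ∑ j ∈ s, adjoint (L j) * L j) u
          = S u - (∑ j ∈ s, adjoint (L j) * L j) u := rfl
      rw [h6] at h3
      exact h3.trans_lt (h4.trans_eq h5)
    rw [dist_eq_norm, norm_sub_rev]
    have hkey' : ‖S u - ∑ b ∈ s, (adjoint (L b) * L b) u‖ ^ 2 < ε ^ 2 := by
      rwa [← ContinuousLinearMap.sum_apply]
    exact lt_of_pow_lt_pow_left₀ 2 hε.le hkey'
  -- norm bound of S
  have hSnorm : ‖S‖ ≤ 2 * ‖G‖ := by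
    have : ‖adjoint G‖ = ‖G‖ := LinearIsometryEquiv.norm_map adjoint G
    calc ‖S‖ = ‖G + adjoint G‖ := norm_neg _
      _ ≤ ‖G‖ + ‖adjoint G‖ := norm_add_le _ _
      _ = 2 * ‖G‖ := by rw [this]; ring
  -- H operator
  refine ⟨S, (-Complex.I) • (G + (2⁻¹ : ℂ) • S), hSsum, hSpos, hSnorm, rfl, ?_, ?_⟩
  · have hGadj : adjoint G = -S - G := by rw [hSdef]; abel
    show star ((-Complex.I) • (G + (2⁻¹ : ℂ) • S)) = (-Complex.I) • (G + (2⁻¹ : ℂ) • S)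
    rw [star_smul, star_add, star_smul, ContinuousLinearMap.star_eq_adjoint,
      ContinuousLinearMap.star_eq_adjoint, hSadj, hGadj]
    simp only [star_neg, Complex.star_def, Complex.conj_I, map_inv₀, map_ofNat,
      RCLike.star_def]
    module
  · rw [smul_smul]
    have hI : Complex.I * -Complex.I = 1 := by
      rw [mul_neg, Complex.I_mul_I, neg_neg]
    rw [hI, one_smul]
    abel
end
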